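/- arXiv:1909.02281 — 7 statements merged into one kernel-verified Lean document; each statement's English description precedes it below -/
import Mathlib

section
/- Let X be a Banach lattice and let S = (S(t))_{t≥0} be a convex C₀-semigroup on X. Then for every T > 0 and every x₀ ∈ X there exist constants L ≥ 0 and r > 0 such that ‖S(t)(x+y) − S(t)x‖ ≤ L‖y‖ for all t ∈ [0,T], all x ∈ X with ‖x − x₀‖ ≤ r, and all y ∈ X with ‖y‖ ≤ r. -/
open Filter Topology Set

lemma sandwich_norm {X : Type*} [NormedAddCommGroup X] [Lattice X] [IsOrderedAddMonoid X] [HasSolidNorm X]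
    {a v b : X} (h1 : a ≤ v) (h2 : v ≤ b) : ‖v‖ ≤ ‖a‖ + ‖b‖ := by
  have h3 : |v| ≤ |a| + |b| := by
    rw [abs]
    exact sup_le (h2.trans ((le_abs_self b).trans (le_add_of_nonneg_left (abs_nonneg a))))
      ((neg_le_neg h1).trans ((neg_le_abs a).trans (le_add_of_nonneg_right (abs_nonneg b))))
  calc ‖v‖ = ‖|v|‖ := (norm_abs_eq_norm v).symm
    _ ≤ ‖|a| + |b|‖ := by
        refine HasSolidNorm.solid ?_
        rwa [abs_abs, abs_of_nonneg (add_nonneg (abs_nonneg a) (abs_nonneg b))]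
    _ ≤ ‖|a|‖ + ‖|b|‖ := norm_add_le _ _
    _ = ‖a‖ + ‖b‖ := by rw [norm_abs_eq_norm, norm_abs_eq_norm]

lemma lipschitz_of_convex_bound {X : Type*} [NormedAddCommGroup X] [Lattice X] [IsOrderedAddMonoid X] [HasSolidNorm X]
    [NormedSpace ℝ X] [PosSMulStrictMono ℝ X] [PosSMulReflectLT ℝ X]
    (F : X → X)
    (hconv : ∀ x y : X, ∀ a : ℝ, 0 ≤ a → a ≤ 1 →
      F (a • x + (1 - a) • y) ≤ a • F x + (1 - a) • F y)
    (c : X) (r M : ℝ) (hr : 0 < r)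
    (hM : ∀ w : X, ‖w - c‖ ≤ 2 * r → ‖F w‖ ≤ M)
    {x y : X} (hx : ‖x - c‖ ≤ r / 2) (hy : ‖y‖ ≤ r / 2) :
    ‖F (x + y) - F x‖ ≤ (4 * M / r) * ‖y‖ := by
  have hM0 : 0 ≤ M := (norm_nonneg _).trans (hM x (hx.trans (by linarith)))
  rcases eq_or_ne y 0 with rfl | hy0
  · simp
  have hyn : 0 < ‖y‖ := norm_pos_iff.mpr hy0
  set lam : ℝ := ‖y‖ / r with hlam_def
  have hlam0 : 0 < lam := div_pos hyn hr
  have hlam1 : lam ≤ 1 := by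
    rw [div_le_one hr]; linarith
  have hkey : lam * (r / ‖y‖) = 1 := by rw [hlam_def]; field_simp
  set zp : X := x + (r / ‖y‖) • y with hzp
  set zm : X := x - (r / ‖y‖) • y with hzm
  have hnorm_ry : ‖(r / ‖y‖) • y‖ = r := by
    rw [norm_smul, Real.norm_eq_abs, abs_of_pos (div_pos hr hyn)]
    field_simp
  -- ball memberships
  have hxin : ‖x - c‖ ≤ 2 * r := hx.trans (by linarith)
  have hxyin : ‖x + y - c‖ ≤ 2 * r := by
    calc ‖x + y - c‖ = ‖(x - c) + y‖ := by congr 1; abel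
      _ ≤ ‖x - c‖ + ‖y‖ := norm_add_le _ _
      _ ≤ 2 * r := by linarith
  have hzpin : ‖zp - c‖ ≤ 2 * r := by
    calc ‖zp - c‖ = ‖(x - c) + (r / ‖y‖) • y‖ := by rw [hzp]; congr 1; abel
      _ ≤ ‖x - c‖ + ‖(r / ‖y‖) • y‖ := norm_add_le _ _
      _ ≤ 2 * r := by rw [hnorm_ry]; linarith
  have hzmin : ‖zm - c‖ ≤ 2 * r := by
    calc ‖zm - c‖ = ‖(x - c) - (r / ‖y‖) • y‖ := by rw [hzm]; congr 1; abel
      _ ≤ ‖x - c‖ + ‖(r / ‖y‖) • y‖ := norm_sub_le _ _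
      _ ≤ 2 * r := by rw [hnorm_ry]; linarith
  -- upper bound
  have hup : F (x + y) - F x ≤ lam • F zp - lam • F x := by
    have h1 := hconv x zp (1 - lam) (by linarith) (by linarith)
    have harg : (1 - lam) • x + (1 - (1 - lam)) • zp = x + y := by
      rw [hzp]
      simp only [sub_sub_cancel, smul_add, smul_smul, hkey]
      rw [sub_smul, one_smul, one_smul]
      abel
    rw [harg] at h1
    have h2 : (1 - lam) • F x = F x - lam • F x := by rw [sub_smul, one_smul]
    rw [h2] at h1
    have := sub_le_sub_right h1 (F x)
    calc F (x + y) - F x ≤ F x - lam • F x + (1 - (1 - lam)) • F zp - F x := this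
      _ = lam • F zp - lam • F x := by simp only [sub_sub_cancel]; abel
  -- lower bound
  have hlo : lam • F x - lam • F zm ≤ F (x + y) - F x := by
    set mu : ℝ := 1 / (1 + lam) with hmu
    have h1lam : (0:ℝ) < 1 + lam := by linarith
    have hmu0 : 0 ≤ mu := by positivity
    have hmu1 : mu ≤ 1 := by rw [hmu, div_le_one h1lam]; linarith
    have h1 := hconv (x + y) zm mu hmu0 hmu1
    have harg : mu • (x + y) + (1 - mu) • zm = x := by
      rw [hzm, smul_add, smul_sub, smul_smul]
      have hco : (1 - mu) * (r / ‖y‖) = mu * (r/‖y‖) * lam := by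
        rw [hmu]; field_simp; ring
      rw [hco]
      have : mu * (r / ‖y‖) * lam = mu * (r/‖y‖ * lam) := by ring
      rw [this, mul_comm (r / ‖y‖) lam, hkey, mul_one]
      have hxx : mu • x + (1 - mu) • x = x := by rw [← add_smul]; simp
      calc mu • x + mu • y + ((1 - mu) • x - mu • y) = mu • x + (1 - mu) • x := by abel
        _ = x := hxx
    rw [harg] at h1
    -- multiply by (1 + lam)
    have h2 := smul_le_smul_of_nonneg_left h1 h1lam.le
    have h3 : (1 + lam) • (mu • F (x + y) + (1 - mu) • F zm) = F (x + y) + lam • F zm := by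
      rw [smul_add, smul_smul, smul_smul]
      have e1 : (1 + lam) * mu = 1 := by rw [hmu]; field_simp
      have e2 : (1 + lam) * (1 - mu) = lam := by rw [hmu]; field_simp; ring
      rw [e1, e2, one_smul]
    rw [h3] at h2
    have h4 : (1 + lam) • F x = F x + lam • F x := by rw [add_smul, one_smul]
    rw [h4] at h2
    have := sub_le_sub_right h2 (F x + lam • F zm)
    calc lam • F x - lam • F zm = F x + lam • F x - (F x + lam • F zm) := by abel
      _ ≤ F (x + y) + lam • F zm - (F x + lam • F zm) := this
      _ = F (x + y) - F x := by abel
  -- combine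
  have hnorm := sandwich_norm hlo hup
  have hFx := hM x hxin
  have hFzp := hM zp hzpin
  have hFzm := hM zm hzmin
  have h5 : ‖lam • F x - lam • F zm‖ ≤ lam * (2 * M) := by
    calc ‖lam • F x - lam • F zm‖ ≤ ‖lam • F x‖ + ‖lam • F zm‖ := norm_sub_le _ _
      _ = lam * ‖F x‖ + lam * ‖F zm‖ := by
          rw [norm_smul, norm_smul, Real.norm_eq_abs, abs_of_pos hlam0]
      _ ≤ lam * (2 * M) := by nlinarith
  have h6 : ‖lam • F zp - lam • F x‖ ≤ lam * (2 * M) := by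
    calc ‖lam • F zp - lam • F x‖ ≤ ‖lam • F zp‖ + ‖lam • F x‖ := norm_sub_le _ _
      _ = lam * ‖F zp‖ + lam * ‖F x‖ := by
          rw [norm_smul, norm_smul, Real.norm_eq_abs, abs_of_pos hlam0]
      _ ≤ lam * (2 * M) := by nlinarith
  have hfin : (4 * M / r) * ‖y‖ = lam * (2 * M) + lam * (2 * M) := by
    rw [hlam_def]; field_simp; ring
  rw [hfin]
  exact hnorm.trans (add_le_add h5 h6)

lemma continuous_of_convex_bdd {X : Type*} [NormedAddCommGroup X] [Lattice X] [IsOrderedAddMonoid X] [HasSolidNorm X]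
    [NormedSpace ℝ X] [PosSMulStrictMono ℝ X] [PosSMulReflectLT ℝ X]
    (F : X → X)
    (hconv : ∀ x y : X, ∀ a : ℝ, 0 ≤ a → a ≤ 1 →
      F (a • x + (1 - a) • y) ≤ a • F x + (1 - a) • F y)
    (hbdd : ∀ r : ℝ, 0 < r → ∃ M : ℝ, ∀ x : X, ‖x‖ ≤ r → ‖F x‖ ≤ M) :
    Continuous F := by
  rw [continuous_iff_continuousAt]
  intro p
  obtain ⟨M, hM⟩ := hbdd (‖p‖ + 2) (by positivity)
  have hball : ∀ w : X, ‖w - p‖ ≤ 2 * 1 → ‖F w‖ ≤ M := by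
    intro w hw
    apply hM
    calc ‖w‖ = ‖(w - p) + p‖ := by congr 1; abel
      _ ≤ ‖w - p‖ + ‖p‖ := norm_add_le _ _
      _ ≤ ‖p‖ + 2 := by linarith
  have hM0 : 0 ≤ M := (norm_nonneg _).trans (hM p (by linarith [norm_nonneg p]))
  rw [Metric.continuousAt_iff]
  intro ε hε
  refine ⟨min (1/2) (ε / (4 * M + 1)), lt_min (by norm_num) (by positivity), ?_⟩
  intro x hxp
  rw [dist_eq_norm] at hxp
  have h1 : ‖x - p‖ ≤ 1/2 := (le_of_lt (lt_of_lt_of_le hxp (min_le_left _ _)))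
  have h2 : ‖x - p‖ < ε / (4 * M + 1) := lt_of_lt_of_le hxp (min_le_right _ _)
  rw [dist_eq_norm]
  have key := lipschitz_of_convex_bound F hconv p 1 M one_pos hball
    (x := p) (y := x - p) (by simp) (by simpa using h1)
  simp only [add_sub_cancel] at key
  calc ‖F x - F p‖ ≤ (4 * M / 1) * ‖x - p‖ := key
    _ ≤ (4 * M + 1) * ‖x - p‖ := by
        apply mul_le_mul_of_nonneg_right _ (norm_nonneg _); linarith
    _ < (4 * M + 1) * (ε / (4 * M + 1)) := by
        apply mul_lt_mul_of_pos_left h2 (by linarith)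
    _ = ε := by field_simp

lemma bound_extend {X : Type*} [NormedAddCommGroup X] [Lattice X] [IsOrderedAddMonoid X] [HasSolidNorm X]
    (S : ℝ → X → X)
    (hbdd : ∀ t : ℝ, 0 ≤ t → ∀ r : ℝ, 0 < r → ∃ M : ℝ, ∀ x : X, ‖x‖ ≤ r → ‖S t x‖ ≤ M)
    (hsg : ∀ s t : ℝ, 0 ≤ s → 0 ≤ t → ∀ x : X, S (t + s) x = S t (S s x))
    (A : Set X) (δ : ℝ) (hδ : 0 < δ) (C₀ : ℝ)
    (hbase : ∀ t ∈ Icc (0:ℝ) δ, ∀ x ∈ A, ‖S t x‖ ≤ C₀)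
    (T : ℝ) :
    ∃ C : ℝ, ∀ t ∈ Icc (0:ℝ) T, ∀ x ∈ A, ‖S t x‖ ≤ C := by
  have claim : ∀ n : ℕ, ∃ C : ℝ, ∀ t ∈ Icc (0:ℝ) (2 ^ n * δ), ∀ x ∈ A, ‖S t x‖ ≤ C := by
    intro n
    induction n with
    | zero => exact ⟨C₀, by simpa using hbase⟩
    | succ n ih =>
      obtain ⟨C, hC⟩ := ih
      set a : ℝ := 2 ^ n * δ with ha_def
      have ha : 0 < a := by positivity
      obtain ⟨M, hMs⟩ := hbdd a ha.le (|C| + 1) (by positivity)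
      refine ⟨max C M, ?_⟩
      intro t ht x hx
      rcases le_or_gt t a with h | h
      · exact (hC t ⟨ht.1, h⟩ x hx).trans (le_max_left _ _)
      · have h2a : t ≤ a + a := by
          have : (2:ℝ) ^ (n+1) * δ = a + a := by rw [ha_def]; ring
          linarith [ht.2, this ▸ ht.2]
        have hta : t - a ∈ Icc (0:ℝ) a := ⟨by linarith, by linarith⟩
        have heq : S t x = S a (S (t - a) x) := by
          have := hsg (t - a) a hta.1 ha.le x
          rwa [show a + (t - a) = t by ring] at this
        rw [heq]
        refine (hMs _ ?_).trans (le_max_right _ _)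
        exact (hC (t - a) hta x hx).trans (by linarith [le_abs_self C])
  rcases le_or_gt T 0 with h | h
  · obtain ⟨C, hC⟩ := claim 0
    exact ⟨C, fun t ht x hx => hC t ⟨ht.1, by have := ht.2; nlinarith⟩ x hx⟩
  · obtain ⟨n, hn⟩ := pow_unbounded_of_one_lt (T / δ) (one_lt_two (α := ℝ))
    obtain ⟨C, hC⟩ := claim n
    refine ⟨C, fun t ht x hx => hC t ⟨ht.1, ?_⟩ x hx⟩
    have : T < 2 ^ n * δ := by
      rw [div_lt_iff₀ hδ] at hn; linarith
    linarith [ht.2]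

/-- For a convex C₀-semigroup `S` on a Banach lattice `X`, for every `T > 0`
and `x₀ ∈ X` there exist `L ≥ 0` and `r > 0` such that
`‖S(t)(x+y) − S(t)x‖ ≤ L‖y‖` for all `t ∈ [0,T]`, `‖x − x₀‖ ≤ r`, `‖y‖ ≤ r`. -/
theorem convex_semigroup_local_lipschitz_increment
    {X : Type*} [NormedAddCommGroup X] [Lattice X] [IsOrderedAddMonoid X] [HasSolidNorm X]
    [NormedSpace ℝ X] [CompleteSpace X]
    [PosSMulStrictMono ℝ X] [PosSMulReflectLT ℝ X]
    (S : ℝ → X → X)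
    (hconv : ∀ t : ℝ, 0 ≤ t → ∀ x y : X, ∀ a : ℝ, 0 ≤ a → a ≤ 1 →
      S t (a • x + (1 - a) • y) ≤ a • S t x + (1 - a) • S t y)
    (hbdd : ∀ t : ℝ, 0 ≤ t → ∀ r : ℝ, 0 < r → ∃ M : ℝ, ∀ x : X, ‖x‖ ≤ r → ‖S t x‖ ≤ M)
    (hid : ∀ x : X, S 0 x = x)
    (hsg : ∀ s t : ℝ, 0 ≤ s → 0 ≤ t → ∀ x : X, S (t + s) x = S t (S s x))
    (hc0 : ∀ x : X, Tendsto (fun t : ℝ => S t x) (𝓝[>] (0 : ℝ)) (𝓝 x))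
    (T : ℝ) (hT : 0 < T) (x₀ : X) :
    ∃ L : ℝ, 0 ≤ L ∧ ∃ r : ℝ, 0 < r ∧
      ∀ t : ℝ, t ∈ Icc (0 : ℝ) T → ∀ x : X, ‖x - x₀‖ ≤ r → ∀ y : X, ‖y‖ ≤ r →
        ‖S t (x + y) - S t x‖ ≤ L * ‖y‖ := by
  have : Nonempty X := ⟨x₀⟩
  -- Step 1: pointwise orbit bound on [0,T]
  have hpt : ∀ p : X, ∃ C : ℝ, ∀ t ∈ Icc (0:ℝ) T, ‖S t p‖ ≤ C := by
    intro p
    have hev : ∀ᶠ t in 𝓝[>] (0:ℝ), dist (S t p) p < 1 :=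
      Metric.tendsto_nhds.mp (hc0 p) 1 one_pos
    obtain ⟨δ, hδ0, hδ⟩ := mem_nhdsGT_iff_exists_Ioc_subset.mp hev
    have hbasep : ∀ t ∈ Icc (0:ℝ) δ, ‖S t p‖ ≤ ‖p‖ + 1 := by
      intro t ht
      rcases eq_or_lt_of_le ht.1 with h0 | h0
      · rw [← h0, hid]; linarith [norm_nonneg p]
      · have := hδ ⟨h0, ht.2⟩
        rw [Set.mem_setOf_eq, dist_eq_norm] at this
        calc ‖S t p‖ = ‖(S t p - p) + p‖ := by congr 1; abel
          _ ≤ ‖S t p - p‖ + ‖p‖ := norm_add_le _ _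
          _ ≤ ‖p‖ + 1 := by linarith
    have hbase : ∀ t ∈ Icc (0:ℝ) δ, ∀ x ∈ ({p} : Set X), ‖S t x‖ ≤ ‖p‖ + 1 := by
      intro t ht x hx
      rw [Set.mem_singleton_iff.mp hx]
      exact hbasep t ht
    obtain ⟨C, hC⟩ := bound_extend S hbdd hsg ({p} : Set X) δ hδ0 (‖p‖ + 1) hbase T
    exact ⟨C, fun t ht => hC t ht p rfl⟩
  -- Step 2: Baire category to get a ball with a uniform bound for small times
  set Fs : ℕ → Set X := fun n =>
    {x | ‖x‖ ≤ n} ∩ ⋂ t ∈ Icc (0:ℝ) (1/(n+1)), {x | ‖S t x‖ ≤ n} with hFs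
  have hclosed : ∀ n, IsClosed (Fs n) := by
    intro n
    refine (isClosed_le continuous_norm continuous_const).inter ?_
    refine isClosed_biInter fun t ht => ?_
    have hcont : Continuous (S t) :=
      continuous_of_convex_bdd (S t) (hconv t ht.1) (hbdd t ht.1)
    exact isClosed_le hcont.norm continuous_const
  have hcover : (⋃ n, Fs n) = univ := by
    rw [Set.eq_univ_iff_forall]
    intro x
    have hev : ∀ᶠ t in 𝓝[>] (0:ℝ), dist (S t x) x < 1 :=
      Metric.tendsto_nhds.mp (hc0 x) 1 one_pos
    obtain ⟨δ, hδ0, hδ⟩ := mem_nhdsGT_iff_exists_Ioc_subset.mp hev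
    obtain ⟨n, hn⟩ := exists_nat_ge (max (‖x‖ + 1) (1/δ))
    have hn1 : ‖x‖ + 1 ≤ n := (le_max_left _ _).trans hn
    have hn2 : 1/δ ≤ n := (le_max_right _ _).trans hn
    have hδpos : (0:ℝ) < δ := hδ0
    have hsmall : 1/((n:ℝ)+1) ≤ δ := by
      rw [div_le_iff₀ (by positivity)]
      have h1 : 1/δ * δ = 1 := by field_simp
      have h2 : 1/δ * δ ≤ (n:ℝ) * δ := mul_le_mul_of_nonneg_right hn2 hδpos.le
      nlinarith
    refine Set.mem_iUnion.mpr ⟨n, ⟨by simp only [Set.mem_setOf_eq]; linarith, ?_⟩⟩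
    rw [Set.mem_iInter₂]
    intro t ht
    rcases eq_or_lt_of_le ht.1 with h0 | h0
    · rw [Set.mem_setOf_eq, ← h0, hid]; linarith
    · have := hδ ⟨h0, ht.2.trans hsmall⟩
      rw [Set.mem_setOf_eq, dist_eq_norm] at this
      rw [Set.mem_setOf_eq]
      calc ‖S t x‖ = ‖(S t x - x) + x‖ := by congr 1; abel
        _ ≤ ‖S t x - x‖ + ‖x‖ := norm_add_le _ _
        _ ≤ (n:ℝ) := by linarith
  obtain ⟨n, hn⟩ := nonempty_interior_of_iUnion_of_closed hclosed hcover
  obtain ⟨z, hz⟩ := hn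
  obtain ⟨ρ', hρ'⟩ := Metric.mem_nhds_iff.mp (mem_interior_iff_mem_nhds.mp hz)
  obtain ⟨hρ'0, hball⟩ := hρ'
  set ρ : ℝ := ρ'/2 with hρdef
  have hρ0 : 0 < ρ := by positivity
  have hzball : ∀ x ∈ Metric.closedBall z ρ, ∀ t ∈ Icc (0:ℝ) (1/((n:ℝ)+1)), ‖S t x‖ ≤ n := by
    intro x hx t ht
    have hxin : x ∈ Fs n := hball (by
      rw [Metric.mem_ball]
      have := Metric.mem_closedBall.mp hx
      linarith)
    have := hxin.2
    rw [Set.mem_iInter₂] at this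
    exact this t ht
  -- Step 3: extend ball bound to [0,T]
  have hbase2 : ∀ t ∈ Icc (0:ℝ) (1/((n:ℝ)+1)), ∀ x ∈ Metric.closedBall z ρ, ‖S t x‖ ≤ n :=
    fun t ht x hx => hzball x hx t ht
  obtain ⟨K, hK⟩ := bound_extend S hbdd hsg (Metric.closedBall z ρ) (1/((n:ℝ)+1))
    (by positivity) n hbase2 T
  -- Step 4: orbit bounds for x₀ and q
  set q : X := (2:ℝ) • x₀ - z with hq
  obtain ⟨C₁, hC₁⟩ := hpt x₀
  obtain ⟨C₂, hC₂⟩ := hpt q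
  -- Step 5: transfer to a ball around x₀
  set R : ℝ := ρ/2 with hRdef
  have hR0 : 0 < R := by positivity
  set B : X → X → X := fun u v => (1/2:ℝ) • u + (1/2:ℝ) • v with hB
  have hmemA : ∀ w : X, ‖w - x₀‖ ≤ R → ((2:ℝ) • w - q) ∈ Metric.closedBall z ρ := by
    intro w hw
    rw [Metric.mem_closedBall, dist_eq_norm]
    have he : (2:ℝ) • w - q - z = (2:ℝ) • (w - x₀) := by rw [hq]; module
    rw [he, norm_smul, Real.norm_ofNat]
    linarith
  have hup : ∀ t ∈ Icc (0:ℝ) T, ∀ w : X, ‖w - x₀‖ ≤ R →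
      S t w ≤ (1/2:ℝ) • S t ((2:ℝ) • w - q) + (1/2:ℝ) • S t q := by
    intro t ht w hw
    have h1 := hconv t ht.1 ((2:ℝ) • w - q) q (1/2) (by norm_num) (by norm_num)
    have harg : (1/2:ℝ) • ((2:ℝ) • w - q) + (1 - 1/2:ℝ) • q = w := by module
    rw [harg] at h1
    convert h1 using 2 <;> norm_num
  have hupnorm : ∀ t ∈ Icc (0:ℝ) T, ∀ w : X, ‖w - x₀‖ ≤ R →
      ‖(1/2:ℝ) • S t ((2:ℝ) • w - q) + (1/2:ℝ) • S t q‖ ≤ K/2 + C₂/2 := by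
    intro t ht w hw
    have e1 : ‖S t ((2:ℝ) • w - q)‖ ≤ K := hK t ht _ (hmemA w hw)
    have e2 : ‖S t q‖ ≤ C₂ := hC₂ t ht
    calc ‖(1/2:ℝ) • S t ((2:ℝ) • w - q) + (1/2:ℝ) • S t q‖
        ≤ ‖(1/2:ℝ) • S t ((2:ℝ) • w - q)‖ + ‖(1/2:ℝ) • S t q‖ := norm_add_le _ _
      _ = (1/2) * ‖S t ((2:ℝ) • w - q)‖ + (1/2) * ‖S t q‖ := by
          rw [norm_smul, norm_smul, Real.norm_eq_abs, abs_of_pos (by norm_num : (0:ℝ) < 1/2)]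
      _ ≤ K/2 + C₂/2 := by linarith
  set M₀ : ℝ := 2*C₁ + K + C₂ with hM₀
  have hbound : ∀ t ∈ Icc (0:ℝ) T, ∀ w : X, ‖w - x₀‖ ≤ R → ‖S t w‖ ≤ M₀ := by
    intro t ht w hw
    set w' : X := (2:ℝ) • x₀ - w with hw'
    have hw'R : ‖w' - x₀‖ ≤ R := by
      have : w' - x₀ = -(w - x₀) := by rw [hw']; module
      rw [this, norm_neg]; exact hw
    -- lower bound
    have h1 := hconv t ht.1 w w' (1/2) (by norm_num) (by norm_num)
    have harg : (1/2:ℝ) • w + (1 - 1/2:ℝ) • w' = x₀ := by rw [hw']; module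
    rw [harg] at h1
    have h2 := smul_le_smul_of_nonneg_left h1 (by norm_num : (0:ℝ) ≤ 2)
    have h3 : (2:ℝ) • ((1/2:ℝ) • S t w + (1 - 1/2:ℝ) • S t w') = S t w + S t w' := by
      module
    rw [h3] at h2
    have hlow : (2:ℝ) • S t x₀ - ((1/2:ℝ) • S t ((2:ℝ) • w' - q) + (1/2:ℝ) • S t q)
        ≤ S t w := by
      have hup' := hup t ht w' hw'R
      have s1 : (2:ℝ) • S t x₀ - S t w' ≤ S t w := by
        rw [sub_le_iff_le_add]; exact h2
      have s2 : (2:ℝ) • S t x₀ - ((1/2:ℝ) • S t ((2:ℝ) • w' - q) + (1/2:ℝ) • S t q)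
          ≤ (2:ℝ) • S t x₀ - S t w' := sub_le_sub_left hup' _
      exact s2.trans s1
    have hupper := hup t ht w hw
    have hN := sandwich_norm hlow hupper
    have e1 : ‖(2:ℝ) • S t x₀ - ((1/2:ℝ) • S t ((2:ℝ) • w' - q) + (1/2:ℝ) • S t q)‖
        ≤ 2*C₁ + (K/2 + C₂/2) := by
      calc ‖(2:ℝ) • S t x₀ - ((1/2:ℝ) • S t ((2:ℝ) • w' - q) + (1/2:ℝ) • S t q)‖
          ≤ ‖(2:ℝ) • S t x₀‖ + ‖(1/2:ℝ) • S t ((2:ℝ) • w' - q) + (1/2:ℝ) • S t q‖ :=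
            norm_sub_le _ _
        _ ≤ 2*C₁ + (K/2 + C₂/2) := by
            have := hupnorm t ht w' hw'R
            have h2n : ‖(2:ℝ) • S t x₀‖ = 2 * ‖S t x₀‖ := by
              rw [norm_smul, Real.norm_ofNat]
            rw [h2n]
            have := hC₁ t ht
            linarith [hupnorm t ht w' hw'R]
    have e2 := hupnorm t ht w hw
    calc ‖S t w‖ ≤ (2*C₁ + (K/2 + C₂/2)) + (K/2 + C₂/2) := by
          refine hN.trans (add_le_add e1 e2)
      _ = M₀ := by rw [hM₀]; ring
  -- Step 6: conclude via the Lipschitz lemma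
  refine ⟨max (4 * M₀ / (R/2)) 0, le_max_right _ _, R/4, by positivity, ?_⟩
  intro t ht x hx y hy
  have hball' : ∀ w : X, ‖w - x₀‖ ≤ 2 * (R/2) → ‖S t w‖ ≤ M₀ := by
    intro w hw
    exact hbound t ht w (by linarith)
  have key := lipschitz_of_convex_bound (S t) (hconv t ht.1) x₀ (R/2) M₀
    (by positivity) hball' (x := x) (y := y) (by linarith) (by linarith)
  calc ‖S t (x + y) - S t x‖ ≤ (4 * M₀ / (R/2)) * ‖y‖ := key
    _ ≤ max (4 * M₀ / (R/2)) 0 * ‖y‖ :=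
        mul_le_mul_of_nonneg_right (le_max_left _ _) (norm_nonneg _)
end

section
/- Let X be a Banach lattice and let S = (S(t))_{t≥0} be a sublinear C₀-semigroup on X. Then there exist constants ω ∈ ℝ and M ≥ 1 such that ‖S(t)x‖ ≤ M e^{ωt} ‖x‖ for all x ∈ X and all t ≥ 0. -/
open Filter Topology Set

/-- A sublinear C₀-semigroup on a Banach lattice satisfies
`‖S(t)x‖ ≤ M e^{ωt} ‖x‖` for some `ω ∈ ℝ`, `M ≥ 1`. -/
theorem sublinear_semigroup_exponential_bound
    {X : Type*} [NormedAddCommGroup X] [Lattice X] [HasSolidNorm X]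
    [IsOrderedAddMonoid X] [NormedSpace ℝ X] [CompleteSpace X]
    [PosSMulStrictMono ℝ X] [PosSMulReflectLT ℝ X]
    (S : ℝ → X → X)
    (hconv : ∀ t : ℝ, 0 ≤ t → ∀ x y : X, ∀ a : ℝ, 0 ≤ a → a ≤ 1 →
      S t (a • x + (1 - a) • y) ≤ a • S t x + (1 - a) • S t y)
    (hposhom : ∀ t : ℝ, 0 ≤ t → ∀ a : ℝ, 0 < a → ∀ x : X, S t (a • x) = a • S t x)
    (hbdd : ∀ t : ℝ, 0 ≤ t → ∀ r : ℝ, 0 < r → ∃ M : ℝ, ∀ x : X, ‖x‖ ≤ r → ‖S t x‖ ≤ M)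
    (hid : ∀ x : X, S 0 x = x)
    (hsg : ∀ s t : ℝ, 0 ≤ s → 0 ≤ t → ∀ x : X, S (t + s) x = S t (S s x))
    (hc0 : ∀ x : X, Tendsto (fun t : ℝ => S t x) (𝓝[>] (0 : ℝ)) (𝓝 x)) :
    ∃ (ω : ℝ) (M : ℝ), 1 ≤ M ∧
      ∀ x : X, ∀ t : ℝ, 0 ≤ t → ‖S t x‖ ≤ M * Real.exp (ω * t) * ‖x‖ := by
  -- S t 0 = 0
  have hzero : ∀ t : ℝ, 0 ≤ t → S t 0 = 0 := by
    intro t ht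
    have h := hposhom t ht 2 (by norm_num) 0
    rw [smul_zero] at h
    rw [two_smul] at h
    exact add_eq_left.mp h.symm
  -- subadditivity
  have hsubadd : ∀ t : ℝ, 0 ≤ t → ∀ x y : X, S t (x + y) ≤ S t x + S t y := by
    intro t ht x y
    have h2 : S t ((2:ℝ)⁻¹ • (x + y)) = (2:ℝ)⁻¹ • S t (x + y) :=
      hposhom t ht _ (by norm_num) _
    have harg : (2:ℝ)⁻¹ • (x + y) = (2:ℝ)⁻¹ • x + (1 - (2:ℝ)⁻¹) • y := by
      rw [smul_add]; norm_num
    have hc := hconv t ht x y (2:ℝ)⁻¹ (by norm_num) (by norm_num)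
    rw [← harg, h2] at hc
    have := smul_le_smul_of_nonneg_left hc (by norm_num : (0:ℝ) ≤ 2)
    rw [smul_add, smul_smul, smul_smul, smul_smul] at this
    norm_num at this
    exact this
  -- -S t z ≤ S t (-z)
  have hneg : ∀ t : ℝ, 0 ≤ t → ∀ z : X, -(S t z) ≤ S t (-z) := by
    intro t ht z
    have h := hsubadd t ht z (-z)
    rw [add_neg_cancel, hzero t ht] at h
    rw [neg_le_iff_add_nonneg, add_comm]
    exact h
  -- scaling a pointwise unit-ball bound to a global bound
  have hscale : ∀ t : ℝ, 0 ≤ t → ∀ K : ℝ, (∀ x : X, ‖x‖ ≤ 1 → ‖S t x‖ ≤ K) →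
      ∀ x : X, ‖S t x‖ ≤ K * ‖x‖ := by
    intro t ht K hK x
    rcases eq_or_ne x 0 with rfl | hx
    · simp [hzero t ht]
    · have hxpos : 0 < ‖x‖ := norm_pos_iff.mpr hx
      have h1 : S t x = ‖x‖ • S t (‖x‖⁻¹ • x) := by
        rw [← hposhom t ht _ hxpos, smul_inv_smul₀ hxpos.ne']
      have h2 : ‖S t (‖x‖⁻¹ • x)‖ ≤ K := by
        apply hK
        rw [norm_smul, norm_inv, norm_norm, inv_mul_cancel₀ hxpos.ne']
      rw [h1, norm_smul, Real.norm_eq_abs, abs_of_pos hxpos, mul_comm]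
      exact mul_le_mul_of_nonneg_right h2 hxpos.le
  -- continuity of each S t
  have hcont : ∀ t : ℝ, 0 ≤ t → Continuous (S t) := by
    intro t ht
    obtain ⟨C0, hC0⟩ := hbdd t ht 1 one_pos
    set C := max C0 0 with hC
    have hCb : ∀ x : X, ‖S t x‖ ≤ C * ‖x‖ :=
      hscale t ht C (fun y hy => (hC0 y hy).trans (le_max_left _ _))
    have hlip : ∀ x y : X, ‖S t x - S t y‖ ≤ 2 * C * ‖x - y‖ := by
      intro x y
      have h1 : S t x - S t y ≤ S t (x - y) := by
        have h := hsubadd t ht (x - y) y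
        rw [sub_add_cancel] at h
        exact sub_le_iff_le_add.mpr h
      have h2 : S t y - S t x ≤ S t (y - x) := by
        have h := hsubadd t ht (y - x) x
        rw [sub_add_cancel] at h
        exact sub_le_iff_le_add.mpr h
      have habs : |S t x - S t y| ≤ |S t (x - y)| + |S t (y - x)| := by
        refine abs_le'.mpr ⟨?_, ?_⟩
        · exact h1.trans ((le_abs_self _).trans (le_add_of_nonneg_right (abs_nonneg _)))
        · rw [neg_sub]
          exact h2.trans ((le_abs_self _).trans (le_add_of_nonneg_left (abs_nonneg _)))
      have hnle : ‖S t x - S t y‖ ≤ ‖|S t (x - y)| + |S t (y - x)|‖ :=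
        norm_le_norm_of_abs_le_abs
          (habs.trans (abs_of_nonneg (add_nonneg (abs_nonneg _) (abs_nonneg _))).ge)
      calc ‖S t x - S t y‖ ≤ ‖|S t (x - y)| + |S t (y - x)|‖ := hnle
        _ ≤ ‖|S t (x - y)|‖ + ‖|S t (y - x)|‖ := norm_add_le _ _
        _ = ‖S t (x - y)‖ + ‖S t (y - x)‖ := by rw [norm_abs_eq_norm, norm_abs_eq_norm]
        _ ≤ C * ‖x - y‖ + C * ‖y - x‖ := add_le_add (hCb _) (hCb _)
        _ = 2 * C * ‖x - y‖ := by rw [norm_sub_rev y x]; ring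
    have hCnn : 0 ≤ 2 * C := by positivity
    refine LipschitzWith.continuous (K := ⟨2 * C, hCnn⟩) ?_
    apply LipschitzWith.of_dist_le_mul
    intro x y
    rw [dist_eq_norm, dist_eq_norm]
    exact hlip x y
  -- key uniform bound near zero
  have key : ∃ δ : ℝ, 0 < δ ∧ ∃ K : ℝ, ∀ t, 0 ≤ t → t ≤ δ → ∀ x : X, ‖x‖ ≤ 1 → ‖S t x‖ ≤ K := by
    by_contra hcon
    push_neg at hcon
    have hsel : ∀ n : ℕ, ∃ t, 0 < t ∧ t ≤ 1/((n:ℝ)+1) ∧ ∃ x : X, ‖x‖ ≤ 1 ∧ (n:ℝ)+1 < ‖S t x‖ := by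
      intro n
      obtain ⟨t, ht0, htle, x, hx1, hx⟩ := hcon (1/((n:ℝ)+1)) (by positivity) ((n:ℝ)+1)
      refine ⟨t, ?_, htle, x, hx1, hx⟩
      rcases ht0.lt_or_eq with h | h
      · exact h
      · exfalso
        rw [← h, hid] at hx
        have : (0:ℝ) ≤ n := Nat.cast_nonneg n
        linarith
    choose t ht0 htle x hx1 hxbig using hsel
    have httend : Tendsto t atTop (𝓝[>] (0:ℝ)) := by
      refine tendsto_nhdsWithin_of_tendsto_nhds_of_eventually_within _ ?_
        (Eventually.of_forall fun n => ht0 n)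
      exact squeeze_zero (fun n => (ht0 n).le) htle tendsto_one_div_add_atTop_nhds_zero_nat
    set F : ℕ → Set X := fun n =>
      ⋂ k : ℕ, ({y : X | ‖S (t k) y‖ ≤ n} ∩ {y : X | ‖S (t k) (-y)‖ ≤ n}) with hF
    have hFclosed : ∀ n, IsClosed (F n) := by
      intro n
      refine isClosed_iInter fun k => IsClosed.inter ?_ ?_
      · exact isClosed_le ((hcont (t k) (ht0 k).le).norm) continuous_const
      · exact isClosed_le (((hcont (t k) (ht0 k).le).comp continuous_neg).norm) continuous_const
    have hFcover : ∀ y : X, ∃ n, y ∈ F n := by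
      intro y
      have h1 : Tendsto (fun k => ‖S (t k) y‖) atTop (𝓝 ‖y‖) := ((hc0 y).comp httend).norm
      have h2 : Tendsto (fun k => ‖S (t k) (-y)‖) atTop (𝓝 ‖-y‖) := ((hc0 (-y)).comp httend).norm
      obtain ⟨b1, hb1⟩ := h1.bddAbove_range
      obtain ⟨b2, hb2⟩ := h2.bddAbove_range
      obtain ⟨n, hn⟩ := exists_nat_ge (max b1 b2)
      refine ⟨n, mem_iInter.mpr fun k => ⟨?_, ?_⟩⟩
      · exact le_trans (hb1 (mem_range_self k)) (le_trans (le_max_left _ _) hn)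
      · exact le_trans (hb2 (mem_range_self k)) (le_trans (le_max_right _ _) hn)
    have hcover : (⋃ n, F n) = univ := eq_univ_of_forall fun y => mem_iUnion.mpr (hFcover y)
    obtain ⟨n, x₀, hx₀⟩ := nonempty_interior_of_iUnion_of_closed hFclosed hcover
    obtain ⟨ε, hε, hball⟩ := Metric.mem_nhds_iff.mp (mem_interior_iff_mem_nhds.mp hx₀)
    have hmem : ∀ y : X, dist y x₀ < ε → ∀ k,
        ‖S (t k) y‖ ≤ n ∧ ‖S (t k) (-y)‖ ≤ n := by
      intro y hy k
      exact mem_iInter.mp (hball hy) k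
    have hzbound : ∀ k, ∀ z : X, ‖z‖ ≤ ε/2 → ‖S (t k) z‖ ≤ 4*n := by
      intro k z hz
      have htk := (ht0 k).le
      have hx₀m := hmem x₀ (by simpa using hε) k
      have hd1 : dist (x₀ + z) x₀ < ε := by
        rw [dist_eq_norm, add_sub_cancel_left]
        linarith
      have hd2 : dist (x₀ - z) x₀ < ε := by
        have harg : x₀ - z - x₀ = -z := by abel
        rw [dist_eq_norm, harg, norm_neg]
        linarith
      have hpz := hmem (x₀ + z) hd1 k
      have hmz := hmem (x₀ - z) hd2 k
      set u := S (t k) (x₀ + z) + S (t k) (-x₀) with hu_def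
      set v := S (t k) (x₀ - z) + S (t k) (-x₀) with hv_def
      have hu : S (t k) z ≤ u := by
        have h := hsubadd (t k) htk (x₀ + z) (-x₀)
        have harg : (x₀ + z) + -x₀ = z := by abel
        rwa [harg] at h
      have hv : -(S (t k) z) ≤ v := by
        refine (hneg (t k) htk z).trans ?_
        have h := hsubadd (t k) htk (x₀ - z) (-x₀)
        have harg : (x₀ - z) + -x₀ = -z := by abel
        rwa [harg] at h
      have habs : |S (t k) z| ≤ |u| + |v| := by
        refine abs_le'.mpr ⟨?_, ?_⟩
        · exact hu.trans ((le_abs_self _).trans (le_add_of_nonneg_right (abs_nonneg _)))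
        · exact hv.trans ((le_abs_self _).trans (le_add_of_nonneg_left (abs_nonneg _)))
      have hn1 : ‖S (t k) z‖ ≤ ‖|u| + |v|‖ :=
        norm_le_norm_of_abs_le_abs
          (habs.trans (abs_of_nonneg (add_nonneg (abs_nonneg _) (abs_nonneg _))).ge)
      have hun : ‖u‖ ≤ 2*n := by
        calc ‖u‖ ≤ ‖S (t k) (x₀ + z)‖ + ‖S (t k) (-x₀)‖ := norm_add_le _ _
          _ ≤ n + n := add_le_add hpz.1 hx₀m.2
          _ = 2*n := by ring
      have hvn : ‖v‖ ≤ 2*n := by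
        calc ‖v‖ ≤ ‖S (t k) (x₀ - z)‖ + ‖S (t k) (-x₀)‖ := norm_add_le _ _
          _ ≤ n + n := add_le_add hmz.1 hx₀m.2
          _ = 2*n := by ring
      calc ‖S (t k) z‖ ≤ ‖|u| + |v|‖ := hn1
        _ ≤ ‖|u|‖ + ‖|v|‖ := norm_add_le _ _
        _ = ‖u‖ + ‖v‖ := by rw [norm_abs_eq_norm, norm_abs_eq_norm]
        _ ≤ 2*n + 2*n := add_le_add hun hvn
        _ = 4*n := by ring
    have hunit : ∀ k, ∀ y : X, ‖y‖ ≤ 1 → ‖S (t k) y‖ ≤ (4*n)*(2/ε) := by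
      intro k y hy
      have htk := (ht0 k).le
      have h1 : ‖S (t k) ((ε/2) • y)‖ ≤ 4*n := by
        apply hzbound k
        rw [norm_smul, Real.norm_eq_abs, abs_of_pos (by positivity : (0:ℝ) < ε/2)]
        calc ε/2 * ‖y‖ ≤ ε/2 * 1 := by
              apply mul_le_mul_of_nonneg_left hy (by positivity)
          _ = ε/2 := mul_one _
      rw [hposhom (t k) htk (ε/2) (by positivity) y, norm_smul, Real.norm_eq_abs,
        abs_of_pos (by positivity : (0:ℝ) < ε/2)] at h1
      have h2 : ‖S (t k) y‖ ≤ (4*(n:ℝ))/(ε/2) :=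
        (le_div_iff₀ (by positivity)).mpr (by rw [mul_comm]; exact h1)
      have heq : (4*(n:ℝ))/(ε/2) = 4*n*(2/ε) := by
        field_simp
      rwa [heq] at h2
    obtain ⟨k, hk⟩ := exists_nat_gt ((4*(n:ℝ))*(2/ε))
    have hb := hxbig k
    have h2 := hunit k (x k) (hx1 k)
    have : (k:ℝ) < (k:ℝ)+1 := by linarith
    linarith
  -- build constants
  obtain ⟨δ, hδ, K0, hK0⟩ := key
  set K := max K0 1 with hKdef
  have hK1 : (1:ℝ) ≤ K := le_max_right _ _
  have hKpos : (0:ℝ) < K := lt_of_lt_of_le one_pos hK1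
  have hKb : ∀ t', 0 ≤ t' → t' ≤ δ → ∀ x : X, ‖S t' x‖ ≤ K * ‖x‖ := fun t' h1 h2 =>
    hscale t' h1 K (fun y hy => (hK0 t' h1 h2 y hy).trans (le_max_left _ _))
  have hind : ∀ n : ℕ, ∀ t', 0 ≤ t' → t' ≤ ((n:ℝ)+1)*δ → ∀ x : X,
      ‖S t' x‖ ≤ K^(n+1) * ‖x‖ := by
    intro n
    induction n with
    | zero =>
      intro t' h1 h2 x
      simpa using hKb t' h1 (by simpa using h2) x
    | succ m ih =>
      intro t' h1 h2 x
      push_cast at h2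
      rcases le_or_gt t' (((m:ℝ)+1)*δ) with h | h
      · refine (ih t' h1 h x).trans ?_
        apply mul_le_mul_of_nonneg_right _ (norm_nonneg x)
        exact pow_le_pow_right₀ hK1 (by omega)
      · have hδt : 0 ≤ t' - δ := by nlinarith
        have hsg' := hsg δ (t' - δ) hδ.le hδt x
        rw [sub_add_cancel] at hsg'
        rw [hsg']
        have h3 : t' - δ ≤ ((m:ℝ)+1)*δ := by nlinarith
        calc ‖S (t'-δ) (S δ x)‖ ≤ K^(m+1) * ‖S δ x‖ := ih _ hδt h3 _
          _ ≤ K^(m+1) * (K * ‖x‖) :=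
              mul_le_mul_of_nonneg_left (hKb δ hδ.le le_rfl x) (by positivity)
          _ = K^(m+1+1) * ‖x‖ := by ring
  refine ⟨Real.log K / δ, K, hK1, ?_⟩
  intro x t' ht'
  set n := Nat.floor (t'/δ) with hn_def
  have hn1 : (n:ℝ) ≤ t'/δ := Nat.floor_le (by positivity)
  have hn2 : t'/δ < (n:ℝ)+1 := Nat.lt_floor_add_one _
  have ht2 : t' ≤ ((n:ℝ)+1)*δ := by
    rw [div_lt_iff₀ hδ] at hn2
    linarith
  have hmain := hind n t' ht' ht2 x
  have hKn : K^n ≤ Real.exp (Real.log K / δ * t') := by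
    have h0 : K^n = Real.exp ((n:ℝ) * Real.log K) := by
      rw [Real.exp_nat_mul, Real.exp_log hKpos]
    rw [h0]
    apply Real.exp_le_exp.mpr
    have hlog : 0 ≤ Real.log K := Real.log_nonneg hK1
    have heq : Real.log K / δ * t' = (t'/δ) * Real.log K := by
      field_simp
    rw [heq]
    exact mul_le_mul_of_nonneg_right hn1 hlog
  calc ‖S t' x‖ ≤ K^(n+1) * ‖x‖ := hmain
    _ = K * K^n * ‖x‖ := by ring
    _ ≤ K * Real.exp (Real.log K / δ * t') * ‖x‖ := by
        apply mul_le_mul_of_nonneg_right _ (norm_nonneg x)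
        exact mul_le_mul_of_nonneg_left hKn hKpos.le
end

section
/- Let X be a Banach lattice and let S = (S(t))_{t≥0} be a convex C₀-semigroup on X. Then for every T > 0 and every x₀ ∈ X there exist constants L ≥ 0 and r > 0 such that sup_{t∈[0,T]} ‖S(t)y − S(t)z‖ ≤ L‖y − z‖ for all y, z ∈ X with ‖y − x₀‖ ≤ r and ‖z − x₀‖ ≤ r. -/
open Filter Topology Set

/-- A convex operator bounded (in norm) on the ball of radius `4r` around `c`
is Lipschitz on the ball of radius `r` around `c`. -/
theorem convex_op_lipschitz_on_ball
    {X : Type*} [NormedAddCommGroup X] [Lattice X] [HasSolidNorm X]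
    [IsOrderedAddMonoid X] [NormedSpace ℝ X]
    (S1 : X → X)
    (hconv1 : ∀ x y : X, ∀ a : ℝ, 0 ≤ a → a ≤ 1 →
      S1 (a • x + (1 - a) • y) ≤ a • S1 x + (1 - a) • S1 y)
    (c : X) (r M : ℝ) (hr : 0 < r)
    (hM : ∀ x : X, ‖x - c‖ ≤ 4 * r → ‖S1 x‖ ≤ M) :
    ∀ y z : X, ‖y - c‖ ≤ r → ‖z - c‖ ≤ r →
      ‖S1 y - S1 z‖ ≤ (4 * M / r) * ‖y - z‖ := by
  -- first, a one-sided estimate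
  have key : ∀ y z : X, ‖y - c‖ ≤ r → ‖z - c‖ ≤ r → y ≠ z →
      S1 z - S1 y ≤ (‖z - y‖ / (‖z - y‖ + r)) • (S1 (y + ((‖z - y‖ + r)/‖z - y‖) • (z - y)) - S1 y) := by
    intro y z hy hz hne
    set d : ℝ := ‖z - y‖ with hd
    have hd0 : 0 < d := by
      simpa [hd] using norm_pos_iff.mpr (sub_ne_zero.mpr (Ne.symm hne))
    have hdr : 0 < d + r := by linarith
    set lam : ℝ := d / (d + r) with hlam
    set w : X := y + ((d + r)/d) • (z - y) with hw
    have hlm : lam * ((d + r)/d) = 1 := by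
      rw [hlam, div_mul_div_comm, mul_comm d, div_self (mul_ne_zero hdr.ne' hd0.ne')]
    have hzeq : lam • w + (1 - lam) • y = z := by
      rw [hw, smul_add, smul_smul, hlm, one_smul, sub_smul, one_smul]
      abel
    have h1 := hconv1 w y lam (by positivity)
      (by rw [hlam, div_le_one hdr]; linarith)
    rw [hzeq] at h1
    calc S1 z - S1 y ≤ (lam • S1 w + (1 - lam) • S1 y) - S1 y := sub_le_sub_right h1 _
      _ = lam • (S1 w - S1 y) := by rw [sub_smul, one_smul, smul_sub]; abel
  intro y z hy hz
  rcases eq_or_ne y z with h | h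
  · have hM0 : 0 ≤ M := le_trans (norm_nonneg _) (hM y (by linarith [norm_nonneg (y - c)]))
    rw [h]; simp
  · set d : ℝ := ‖z - y‖ with hd
    have hd0 : 0 < d := by
      simpa [hd] using norm_pos_iff.mpr (sub_ne_zero.mpr (Ne.symm h))
    have hdr : 0 < d + r := by linarith
    have hd2r : d ≤ 2 * r := by
      have : ‖z - y‖ ≤ ‖z - c‖ + ‖c - y‖ := norm_sub_le_norm_sub_add_norm_sub z c y
      rw [norm_sub_rev c y] at this
      rw [hd]; linarith
    set lam : ℝ := d / (d + r) with hlam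
    set w : X := y + ((d + r)/d) • (z - y) with hw
    set w' : X := z + ((d + r)/d) • (y - z) with hw'
    have hd' : ‖y - z‖ = d := by rw [hd, norm_sub_rev]
    have h1 : S1 z - S1 y ≤ lam • (S1 w - S1 y) := key y z hy hz h
    have h2 : S1 y - S1 z ≤ lam • (S1 w' - S1 z) := by
      have := key z y hz hy (Ne.symm h)
      rwa [hd'] at this
    -- norms of the far points
    have hwball : ‖w - c‖ ≤ 4 * r := by
      have h1' : ‖w - c‖ ≤ ‖y - c‖ + ‖((d + r)/d) • (z - y)‖ := by
        have : w - c = (y - c) + ((d + r)/d) • (z - y) := by rw [hw]; abel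
        rw [this]; exact norm_add_le _ _
      have h2' : ‖((d + r)/d) • (z - y)‖ = d + r := by
        rw [norm_smul, Real.norm_of_nonneg (by positivity), ← hd]
        field_simp
      rw [h2'] at h1'; linarith
    have hw'ball : ‖w' - c‖ ≤ 4 * r := by
      have h1' : ‖w' - c‖ ≤ ‖z - c‖ + ‖((d + r)/d) • (y - z)‖ := by
        have : w' - c = (z - c) + ((d + r)/d) • (y - z) := by rw [hw']; abel
        rw [this]; exact norm_add_le _ _
      have h2' : ‖((d + r)/d) • (y - z)‖ = d + r := by
        rw [norm_smul, Real.norm_of_nonneg (by positivity), hd']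
        field_simp
      rw [h2'] at h1'; linarith
    have hM0 : 0 ≤ M := le_trans (norm_nonneg _) (hM w hwball)
    -- combine the two one-sided bounds
    have hlam0 : 0 ≤ lam := by positivity
    have habs : |S1 z - S1 y| ≤ |lam • (S1 w - S1 y)| + |lam • (S1 w' - S1 z)| := by
      rw [abs_le']
      constructor
      · calc S1 z - S1 y ≤ lam • (S1 w - S1 y) := h1
          _ ≤ |lam • (S1 w - S1 y)| := le_abs_self _
          _ ≤ _ := le_add_of_nonneg_right (abs_nonneg _)
      · calc -(S1 z - S1 y) = S1 y - S1 z := by abel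
          _ ≤ lam • (S1 w' - S1 z) := h2
          _ ≤ |lam • (S1 w' - S1 z)| := le_abs_self _
          _ ≤ _ := le_add_of_nonneg_left (abs_nonneg _)
    have hnorm : ‖S1 z - S1 y‖ ≤ ‖lam • (S1 w - S1 y)‖ + ‖lam • (S1 w' - S1 z)‖ := by
      have : ‖S1 z - S1 y‖ ≤ ‖|lam • (S1 w - S1 y)| + |lam • (S1 w' - S1 z)|‖ := by
        apply norm_le_norm_of_abs_le_abs
        rwa [abs_of_nonneg (by positivity : (0:X) ≤ |lam • (S1 w - S1 y)| + |lam • (S1 w' - S1 z)|)]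
      calc ‖S1 z - S1 y‖ ≤ ‖|lam • (S1 w - S1 y)| + |lam • (S1 w' - S1 z)|‖ := this
        _ ≤ ‖|lam • (S1 w - S1 y)|‖ + ‖|lam • (S1 w' - S1 z)|‖ := norm_add_le _ _
        _ = ‖lam • (S1 w - S1 y)‖ + ‖lam • (S1 w' - S1 z)‖ := by
            rw [norm_abs_eq_norm, norm_abs_eq_norm]
    have hb1 : ‖lam • (S1 w - S1 y)‖ ≤ lam * (2 * M) := by
      rw [norm_smul, Real.norm_of_nonneg hlam0]
      have := norm_sub_le (S1 w) (S1 y)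
      have hA := hM w hwball
      have hB := hM y (by linarith)
      exact mul_le_mul_of_nonneg_left (by linarith) hlam0
    have hb2 : ‖lam • (S1 w' - S1 z)‖ ≤ lam * (2 * M) := by
      rw [norm_smul, Real.norm_of_nonneg hlam0]
      have := norm_sub_le (S1 w') (S1 z)
      have hA := hM w' hw'ball
      have hB := hM z (by linarith)
      exact mul_le_mul_of_nonneg_left (by linarith) hlam0
    have hlamd : lam ≤ d / r := by
      rw [hlam, div_le_div_iff₀ hdr hr]
      nlinarith
    have : ‖S1 z - S1 y‖ ≤ (d / r) * (4 * M) := by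
      calc ‖S1 z - S1 y‖ ≤ lam * (2 * M) + lam * (2 * M) := le_trans hnorm (by linarith)
        _ = lam * (4 * M) := by ring
        _ ≤ (d / r) * (4 * M) := mul_le_mul_of_nonneg_right hlamd (by positivity)
    rw [norm_sub_rev, hd']
    calc ‖S1 z - S1 y‖ ≤ (d / r) * (4 * M) := this
      _ = (4 * M / r) * d := by ring

theorem norm_le_of_order_bounds
    {X : Type*} [NormedAddCommGroup X] [Lattice X] [HasSolidNorm X]
    [IsOrderedAddMonoid X]
    {a u l : X} (h1 : a ≤ u) (h2 : l ≤ a) : ‖a‖ ≤ ‖u‖ + ‖l‖ := by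
  have habs : |a| ≤ |u| + |l| := by
    rw [abs_le']
    constructor
    · exact le_trans h1 (le_trans (le_abs_self u) (le_add_of_nonneg_right (abs_nonneg l)))
    · calc -a ≤ -l := neg_le_neg h2
        _ ≤ |l| := neg_le_abs l
        _ ≤ |u| + |l| := le_add_of_nonneg_left (abs_nonneg u)
  calc ‖a‖ ≤ ‖|u| + |l|‖ := by
        apply norm_le_norm_of_abs_le_abs
        rwa [abs_of_nonneg (by positivity : (0:X) ≤ |u| + |l|)]
    _ ≤ ‖|u|‖ + ‖|l|‖ := norm_add_le _ _
    _ = ‖u‖ + ‖l‖ := by rw [norm_abs_eq_norm, norm_abs_eq_norm]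

/-- A convex C₀-semigroup on a Banach lattice is locally Lipschitz in the
space variable, uniformly in `t ∈ [0,T]`. -/
theorem convex_semigroup_local_lipschitz
    {X : Type*} [NormedAddCommGroup X] [Lattice X] [HasSolidNorm X]
    [IsOrderedAddMonoid X] [NormedSpace ℝ X] [CompleteSpace X]
    [PosSMulStrictMono ℝ X] [PosSMulReflectLT ℝ X]
    (S : ℝ → X → X)
    (hconv : ∀ t : ℝ, 0 ≤ t → ∀ x y : X, ∀ a : ℝ, 0 ≤ a → a ≤ 1 →
      S t (a • x + (1 - a) • y) ≤ a • S t x + (1 - a) • S t y)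
    (hbdd : ∀ t : ℝ, 0 ≤ t → ∀ r : ℝ, 0 < r → ∃ M : ℝ, ∀ x : X, ‖x‖ ≤ r → ‖S t x‖ ≤ M)
    (hid : ∀ x : X, S 0 x = x)
    (hsg : ∀ s t : ℝ, 0 ≤ s → 0 ≤ t → ∀ x : X, S (t + s) x = S t (S s x))
    (hc0 : ∀ x : X, Tendsto (fun t : ℝ => S t x) (𝓝[>] (0 : ℝ)) (𝓝 x))
    (T : ℝ) (hT : 0 < T) (x₀ : X) :
    ∃ L : ℝ, 0 ≤ L ∧ ∃ r : ℝ, 0 < r ∧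
      ∀ y z : X, ‖y - x₀‖ ≤ r → ‖z - x₀‖ ≤ r →
        ∀ t : ℝ, t ∈ Icc (0 : ℝ) T → ‖S t y - S t z‖ ≤ L * ‖y - z‖ := by
  classical
  haveI : Nonempty X := ⟨x₀⟩
  -- Step 1: each `S t` is continuous
  have hcont : ∀ t : ℝ, 0 ≤ t → Continuous (S t) := by
    intro t ht
    rw [continuous_iff_continuousAt]
    intro c
    obtain ⟨M, hM⟩ := hbdd t ht (‖c‖ + 4) (by positivity)
    have hlip := convex_op_lipschitz_on_ball (S t) (hconv t ht) c 1 M one_pos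
      (fun x hx => hM x (by
        have hx' : ‖x‖ ≤ ‖x - c‖ + ‖c‖ := by
          calc ‖x‖ = ‖(x - c) + c‖ := by rw [sub_add_cancel]
            _ ≤ ‖x - c‖ + ‖c‖ := norm_add_le _ _
        linarith))
    apply continuousAt_of_locally_lipschitz one_pos (4 * M / 1)
    intro y hy
    rw [dist_eq_norm, dist_eq_norm]
    exact hlip y c (by rw [dist_eq_norm] at hy; linarith) (by simp)
  -- Step 2: local-in-time boundedness of each orbit
  have horbit : ∀ v : X, ∃ δ : ℝ, 0 < δ ∧ ∀ t ∈ Icc (0:ℝ) δ, ‖S t v‖ ≤ ‖v‖ + 1 := by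
    intro v
    have h := hc0 v
    rw [Metric.tendsto_nhdsWithin_nhds] at h
    obtain ⟨δ, hδ0, hδ⟩ := h 1 one_pos
    refine ⟨δ/2, by linarith, fun t ht => ?_⟩
    rcases eq_or_lt_of_le ht.1 with h0 | h0
    · rw [← h0, hid]; linarith [norm_nonneg v]
    · have hd : dist (S t v) v < 1 := hδ (Set.mem_Ioi.mpr h0) (by
        rw [Real.dist_eq, sub_zero, abs_of_pos h0]; linarith [ht.2])
      rw [dist_eq_norm] at hd
      calc ‖S t v‖ = ‖v + (S t v - v)‖ := by congr 1; abel
        _ ≤ ‖v‖ + ‖S t v - v‖ := norm_add_le _ _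
        _ ≤ ‖v‖ + 1 := by linarith
  -- Step 3: Baire category
  set P : ℕ → Set X := fun n => {x | ∀ t ∈ Icc (0:ℝ) (1/((n:ℝ)+1)),
    ‖S t x‖ ≤ (n:ℝ)+1 ∧ ‖S t ((2:ℝ) • x₀ - x)‖ ≤ (n:ℝ)+1 ∧ ‖S t ((2:ℝ) • x - x₀)‖ ≤ (n:ℝ)+1}
    with hP
  have hclosed : ∀ n, IsClosed (P n) := by
    intro n
    have heq : P n = ⋂ t ∈ Icc (0:ℝ) (1/((n:ℝ)+1)),
        ({x | ‖S t x‖ ≤ (n:ℝ)+1} ∩ ({x | ‖S t ((2:ℝ) • x₀ - x)‖ ≤ (n:ℝ)+1} ∩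
          {x | ‖S t ((2:ℝ) • x - x₀)‖ ≤ (n:ℝ)+1})) := by
      ext x
      simp only [hP, Set.mem_setOf_eq, Set.mem_iInter, Set.mem_inter_iff]
      try tauto
    rw [heq]
    apply isClosed_biInter
    intro t ht
    refine IsClosed.inter ?_ (IsClosed.inter ?_ ?_)
    · exact isClosed_le ((hcont t ht.1).norm) continuous_const
    · exact isClosed_le (((hcont t ht.1).comp (continuous_const.sub continuous_id)).norm)
        continuous_const
    · exact isClosed_le (((hcont t ht.1).comp
        ((continuous_id.const_smul (2:ℝ)).sub continuous_const)).norm) continuous_const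
  have hcover : ⋃ n, P n = univ := by
    apply Set.eq_univ_of_forall
    intro x
    obtain ⟨δ₁, hδ₁0, hδ₁⟩ := horbit x
    obtain ⟨δ₂, hδ₂0, hδ₂⟩ := horbit ((2:ℝ) • x₀ - x)
    obtain ⟨δ₃, hδ₃0, hδ₃⟩ := horbit ((2:ℝ) • x - x₀)
    set δm : ℝ := min δ₁ (min δ₂ δ₃) with hδm
    have hδm0 : 0 < δm := by
      simp only [hδm, lt_min_iff]; exact ⟨hδ₁0, hδ₂0, hδ₃0⟩
    set B : ℝ := max (‖x‖+1) (max (‖(2:ℝ) • x₀ - x‖+1) (‖(2:ℝ) • x - x₀‖+1)) with hB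
    obtain ⟨n, hn⟩ := exists_nat_ge (max (1/δm) B)
    rw [Set.mem_iUnion]
    refine ⟨n, fun t ht => ?_⟩
    have hn1 : 1/δm ≤ (n:ℝ) := le_trans (le_max_left _ _) hn
    have hnB : B ≤ (n:ℝ) := le_trans (le_max_right _ _) hn
    have htδ : t ≤ δm := by
      have h1 : 1/((n:ℝ)+1) ≤ δm := by
        rw [div_le_iff₀ (by positivity)]
        have : 1/δm * δm = 1 := by field_simp
        nlinarith
      exact le_trans ht.2 h1
    have ht1 : t ∈ Icc (0:ℝ) δ₁ := ⟨ht.1, le_trans htδ (min_le_left _ _)⟩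
    have ht2 : t ∈ Icc (0:ℝ) δ₂ := ⟨ht.1, le_trans htδ (le_trans (min_le_right _ _) (min_le_left _ _))⟩
    have ht3 : t ∈ Icc (0:ℝ) δ₃ := ⟨ht.1, le_trans htδ (le_trans (min_le_right _ _) (min_le_right _ _))⟩
    refine ⟨le_trans (hδ₁ t ht1) ?_, le_trans (hδ₂ t ht2) ?_, le_trans (hδ₃ t ht3) ?_⟩
    · have : ‖x‖+1 ≤ B := le_max_left _ _
      linarith
    · have : ‖(2:ℝ) • x₀ - x‖+1 ≤ B := le_trans (le_max_left _ _) (le_max_right _ _)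
      linarith
    · have : ‖(2:ℝ) • x - x₀‖+1 ≤ B := le_trans (le_max_right _ _) (le_max_right _ _)
      linarith
  obtain ⟨N, hN⟩ := nonempty_interior_of_iUnion_of_closed hclosed hcover
  obtain ⟨x₁, hx₁⟩ := hN
  obtain ⟨ε, hε0, hεsub⟩ := Metric.isOpen_iff.1 isOpen_interior x₁ hx₁
  have hρsub : Metric.closedBall x₁ (ε/2) ⊆ P N :=
    le_trans (le_trans (Metric.closedBall_subset_ball (by linarith)) hεsub) interior_subset
  set ρ : ℝ := ε/2 with hρdef
  have hρ0 : 0 < ρ := by positivity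
  set δ : ℝ := 1/((N:ℝ)+1) with hδdef
  have hδ0 : 0 < δ := by positivity
  set C : ℝ := 4*((N:ℝ)+1) with hCdef
  have hC0 : 0 < C := by positivity
  set ρ₀ : ℝ := ρ/2 with hρ₀def
  have hρ₀0 : 0 < ρ₀ := by positivity
  -- Step 4: uniform bound for small times on a ball around x₀
  have hbase : ∀ t ∈ Icc (0:ℝ) δ, ∀ y : X, ‖y - x₀‖ ≤ ρ₀ → ‖S t y‖ ≤ C := by
    intro t ht y hy
    -- points in the ball around x₁
    have hwmem : y - x₀ + y - x₀ + x₁ ∈ Metric.closedBall x₁ ρ := by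
      rw [Metric.mem_closedBall, dist_eq_norm]
      have : y - x₀ + y - x₀ + x₁ - x₁ = (y - x₀) + (y - x₀) := by abel
      rw [this]
      calc ‖(y - x₀) + (y - x₀)‖ ≤ ‖y - x₀‖ + ‖y - x₀‖ := norm_add_le _ _
        _ ≤ ρ := by rw [hρ₀def] at hy; linarith
    have hx₁mem : x₁ ∈ Metric.closedBall x₁ ρ := Metric.mem_closedBall_self hρ0.le
    have hvmem : x₁ + (y - x₀) ∈ Metric.closedBall x₁ ρ := by
      rw [Metric.mem_closedBall, dist_eq_norm, add_sub_cancel_left]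
      linarith
    have hx'mem : x₁ + (2⁻¹:ℝ) • (y - x₀) ∈ Metric.closedBall x₁ ρ := by
      rw [Metric.mem_closedBall, dist_eq_norm, add_sub_cancel_left, norm_smul,
        Real.norm_of_nonneg (by norm_num)]
      nlinarith [norm_nonneg (y - x₀)]
    set w : X := y - x₀ + y - x₀ + x₁ with hwdef
    have hPw := hρsub hwmem t ht
    have hPx₁ := hρsub hx₁mem t ht
    have hPv := hρsub hvmem t ht
    have hPx' := hρsub hx'mem t ht
    -- upper bound
    have hyeq : (2⁻¹:ℝ) • w + (1 - 2⁻¹:ℝ) • ((2:ℝ) • x₀ - x₁) = y := by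
      rw [hwdef]
      module
    have hU : S t y ≤ (2⁻¹:ℝ) • S t w + (1 - 2⁻¹:ℝ) • S t ((2:ℝ) • x₀ - x₁) := by
      have := hconv t ht.1 w ((2:ℝ) • x₀ - x₁) 2⁻¹ (by norm_num) (by norm_num)
      rwa [hyeq] at this
    have hUnorm : ‖(2⁻¹:ℝ) • S t w + (1 - 2⁻¹:ℝ) • S t ((2:ℝ) • x₀ - x₁)‖ ≤ (N:ℝ)+1 := by
      have h1 := hPw.1
      have h2 := hPx₁.2.1
      calc ‖(2⁻¹:ℝ) • S t w + (1 - 2⁻¹:ℝ) • S t ((2:ℝ) • x₀ - x₁)‖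
          ≤ ‖(2⁻¹:ℝ) • S t w‖ + ‖(1 - 2⁻¹:ℝ) • S t ((2:ℝ) • x₀ - x₁)‖ := norm_add_le _ _
        _ = 2⁻¹ * ‖S t w‖ + (1 - 2⁻¹) * ‖S t ((2:ℝ) • x₀ - x₁)‖ := by
            rw [norm_smul, norm_smul, Real.norm_of_nonneg (by norm_num),
              Real.norm_of_nonneg (by norm_num)]
        _ ≤ (N:ℝ)+1 := by
            have h12 : (1 - 2⁻¹:ℝ) = 2⁻¹ := by norm_num
            rw [h12]; linarith
    -- lower bound
    set u : X := (2:ℝ) • (x₁ + (2⁻¹:ℝ) • (y - x₀)) - x₀ with hudef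
    have hveq : (2⁻¹:ℝ) • y + (1 - 2⁻¹:ℝ) • u = x₁ + (y - x₀) := by
      rw [hudef]
      module
    have hLle : (2:ℝ) • S t (x₁ + (y - x₀)) - S t u ≤ S t y := by
      have hcv := hconv t ht.1 y u 2⁻¹ (by norm_num) (by norm_num)
      rw [hveq] at hcv
      have h2 : (2:ℝ) • S t (x₁ + (y - x₀)) ≤ (2:ℝ) • ((2⁻¹:ℝ) • S t y + (1 - 2⁻¹:ℝ) • S t u) :=
        smul_le_smul_of_nonneg_left hcv (by norm_num)
      have heq2 : (2:ℝ) • ((2⁻¹:ℝ) • S t y + (1 - 2⁻¹:ℝ) • S t u) = S t y + S t u := by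
        module
      rw [heq2] at h2
      calc (2:ℝ) • S t (x₁ + (y - x₀)) - S t u ≤ (S t y + S t u) - S t u := sub_le_sub_right h2 _
        _ = S t y := by abel
    have hLnorm : ‖(2:ℝ) • S t (x₁ + (y - x₀)) - S t u‖ ≤ 3*((N:ℝ)+1) := by
      have h1 := hPv.1
      have h2 := hPx'.2.2
      calc ‖(2:ℝ) • S t (x₁ + (y - x₀)) - S t u‖
          ≤ ‖(2:ℝ) • S t (x₁ + (y - x₀))‖ + ‖S t u‖ := norm_sub_le _ _
        _ = 2 * ‖S t (x₁ + (y - x₀))‖ + ‖S t u‖ := by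
            rw [norm_smul, Real.norm_of_nonneg (by norm_num)]
        _ ≤ 3*((N:ℝ)+1) := by linarith
    have := norm_le_of_order_bounds hU hLle
    rw [hCdef]
    linarith
  -- Step 5: propagate the bound over [0, T]
  set K : ℕ := Nat.floor (T/δ) with hKdef
  set Mk : ℕ → ℝ := fun k => Classical.choose (hbdd ((k:ℝ)*δ) (by positivity) C hC0) with hMkdef
  have hMk : ∀ k : ℕ, ∀ x : X, ‖x‖ ≤ C → ‖S ((k:ℝ)*δ) x‖ ≤ Mk k :=
    fun k => Classical.choose_spec (hbdd ((k:ℝ)*δ) (by positivity) C hC0)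
  set Mstar : ℝ := max C ((Finset.range (K+1)).sup' (by simp) Mk) with hMstardef
  have hMstar0 : 0 ≤ Mstar := le_trans hC0.le (le_max_left _ _)
  have hfull : ∀ t ∈ Icc (0:ℝ) T, ∀ y : X, ‖y - x₀‖ ≤ ρ₀ → ‖S t y‖ ≤ Mstar := by
    intro t ht y hy
    set k : ℕ := Nat.floor (t/δ) with hkdef
    have hk1 : (k:ℝ)*δ ≤ t := by
      have h1 : (k:ℝ) ≤ t/δ := Nat.floor_le (div_nonneg ht.1 hδ0.le)
      calc (k:ℝ)*δ ≤ (t/δ)*δ := mul_le_mul_of_nonneg_right h1 hδ0.le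
        _ = t := by field_simp
    have hk2 : t < ((k:ℝ)+1)*δ := by
      have h1 : t/δ < (k:ℝ)+1 := Nat.lt_floor_add_one (t/δ)
      calc t = (t/δ)*δ := by field_simp
        _ < ((k:ℝ)+1)*δ := mul_lt_mul_of_pos_right h1 hδ0
    set s : ℝ := t - (k:ℝ)*δ with hsdef
    have hs0 : 0 ≤ s := by rw [hsdef]; linarith
    have hsδ : s ≤ δ := by rw [hsdef]; nlinarith
    have hsplit : S t y = S ((k:ℝ)*δ) (S s y) := by
      have := hsg s ((k:ℝ)*δ) hs0 (by positivity) y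
      rw [← this]
      congr 1
      rw [hsdef]; ring
    rw [hsplit]
    have h1 : ‖S s y‖ ≤ C := hbase s ⟨hs0, hsδ⟩ y hy
    have h2 := hMk k _ h1
    have hkK : k ≤ K := by
      rw [hkdef, hKdef]
      apply Nat.floor_le_floor
      gcongr
      exact ht.2
    calc ‖S ((k:ℝ)*δ) (S s y)‖ ≤ Mk k := h2
      _ ≤ (Finset.range (K+1)).sup' (by simp) Mk :=
          Finset.le_sup' Mk (Finset.mem_range.mpr (by omega))
      _ ≤ Mstar := le_max_right _ _
  -- Step 6: conclude via the Lipschitz lemma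
  refine ⟨4 * Mstar / (ρ₀/4), by positivity, ρ₀/4, by positivity, ?_⟩
  intro y z hy hz t ht
  exact convex_op_lipschitz_on_ball (S t) (hconv t ht.1) x₀ (ρ₀/4) Mstar (by positivity)
    (fun x hx => hfull t ht x (by linarith)) y z hy hz
end

section
/- Let X be a Banach lattice and let S = (S(t))_{t≥0} be a convex C₀-semigroup on X. Then for every x ∈ X the map [0,∞) → X, t ↦ S(t)x, is continuous. -/
open Filter Topology Set

open Metric

section Aux

variable {X : Type*} [NormedAddCommGroup X] [Lattice X] [HasSolidNorm X] [IsOrderedAddMonoid X]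
    [NormedSpace ℝ X] [PosSMulStrictMono ℝ X]

/-- Sandwich: if `a ≤ b ≤ c` then `‖b‖ ≤ ‖a‖ + ‖c‖`. -/
lemma aux_sandwich_norm {a b c : X} (h1 : a ≤ b) (h2 : b ≤ c) : ‖b‖ ≤ ‖a‖ + ‖c‖ := by
  have habs : |b| ≤ |a| + |c| := by
    rw [abs]
    refine sup_le ?_ ?_
    · exact le_add_of_nonneg_of_le (abs_nonneg a) (h2.trans (le_abs_self c))
    · exact le_add_of_le_of_nonneg ((neg_le_neg h1).trans (neg_le_abs a)) (abs_nonneg c)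
  calc ‖b‖ ≤ ‖|a| + |c|‖ := by
        refine norm_le_norm_of_abs_le_abs ?_
        rwa [abs_of_nonneg (add_nonneg (abs_nonneg a) (abs_nonneg c))]
    _ ≤ ‖|a|‖ + ‖|c|‖ := norm_add_le _ _
    _ = ‖a‖ + ‖c‖ := by rw [norm_abs_eq_norm, norm_abs_eq_norm]

/-- A convex operator bounded on a ball of radius `2r` is Lipschitz on the ball of radius `r`. -/
lemma aux_lip {T : X → X}
    (hT : ∀ x y : X, ∀ a : ℝ, 0 ≤ a → a ≤ 1 → T (a • x + (1 - a) • y) ≤ a • T x + (1 - a) • T y)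
    {c : X} {r M : ℝ} (hr : 0 < r)
    (hM : ∀ w : X, ‖w - c‖ ≤ 2 * r → ‖T w‖ ≤ M)
    {x y : X} (hx : ‖x - c‖ ≤ r) (hy : ‖y - c‖ ≤ r) :
    ‖T x - T y‖ ≤ (4 * M / r) * ‖x - y‖ := by
  have hM0 : 0 ≤ M := le_trans (norm_nonneg _) (hM c (by simp; positivity))
  rcases eq_or_ne x y with rfl | hne
  · simp
  set d : ℝ := ‖x - y‖ with hd
  have hd0 : 0 < d := by rwa [hd, norm_pos_iff, sub_ne_zero]
  set s : ℝ := d + r with hs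
  have hs0 : 0 < s := by positivity
  set lam : ℝ := d / s with hlam
  have hlam0 : 0 ≤ lam := by positivity
  have hlam1 : lam ≤ 1 := by
    rw [hlam, div_le_one hs0]; simp [hs]; positivity
  set z1 : X := y + (r / d) • (y - x) with hz1
  set z2 : X := x + (r / d) • (x - y) with hz2
  have hdy : ‖y - x‖ = d := by rw [hd, norm_sub_rev]
  have hz1c : ‖z1 - c‖ ≤ 2 * r := by
    have : z1 - c = (y - c) + (r / d) • (y - x) := by rw [hz1]; abel
    rw [this]
    calc ‖(y - c) + (r / d) • (y - x)‖ ≤ ‖y - c‖ + ‖(r / d) • (y - x)‖ := norm_add_le _ _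
      _ = ‖y - c‖ + (r / d) * d := by
          rw [norm_smul, Real.norm_eq_abs, abs_of_nonneg (by positivity), hdy]
      _ ≤ r + r := by rw [div_mul_cancel₀ _ (ne_of_gt hd0)]; linarith
      _ = 2 * r := by ring
  have hz2c : ‖z2 - c‖ ≤ 2 * r := by
    have : z2 - c = (x - c) + (r / d) • (x - y) := by rw [hz2]; abel
    rw [this]
    calc ‖(x - c) + (r / d) • (x - y)‖ ≤ ‖x - c‖ + ‖(r / d) • (x - y)‖ := norm_add_le _ _
      _ = ‖x - c‖ + (r / d) * d := by
          rw [norm_smul, Real.norm_eq_abs, abs_of_nonneg (by positivity), hd]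
      _ ≤ r + r := by rw [div_mul_cancel₀ _ (ne_of_gt hd0)]; linarith
      _ = 2 * r := by ring
  -- convex combination identities
  have hid1 : lam • z1 + (1 - lam) • x = y := by
    rw [hz1, hlam]
    rw [smul_add, smul_smul]
    have h1 : d / s * (r / d) = 1 - d / s := by
      field_simp
      ring
    rw [h1, smul_sub]
    module
  have hid2 : lam • z2 + (1 - lam) • y = x := by
    rw [hz2, hlam]
    rw [smul_add, smul_smul]
    have h1 : d / s * (r / d) = 1 - d / s := by
      field_simp
      ring
    rw [h1, smul_sub]
    module
  have h1 : T y - T x ≤ lam • (T z1 - T x) := by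
    have := hT z1 x lam hlam0 hlam1
    rw [hid1] at this
    calc T y - T x ≤ (lam • T z1 + (1 - lam) • T x) - T x := sub_le_sub_right this _
      _ = lam • (T z1 - T x) := by module
  have h2 : T x - T y ≤ lam • (T z2 - T y) := by
    have := hT z2 y lam hlam0 hlam1
    rw [hid2] at this
    calc T x - T y ≤ (lam • T z2 + (1 - lam) • T y) - T y := sub_le_sub_right this _
      _ = lam • (T z2 - T y) := by module
  set B : X := lam • (|T z1 - T x| + |T z2 - T y|) with hB
  have hBnn : 0 ≤ B := smul_nonneg hlam0 (add_nonneg (abs_nonneg _) (abs_nonneg _))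
  have hb1 : T x - T y ≤ B := by
    refine h2.trans ?_
    rw [hB]
    refine smul_le_smul_of_nonneg_left ?_ hlam0
    exact le_add_of_nonneg_of_le (abs_nonneg _) (le_abs_self _)
  have hb2 : -(T x - T y) ≤ B := by
    rw [neg_sub]
    refine h1.trans ?_
    rw [hB]
    refine smul_le_smul_of_nonneg_left ?_ hlam0
    exact le_add_of_le_of_nonneg (le_abs_self _) (abs_nonneg _)
  have habs : |T x - T y| ≤ B := by rw [abs]; exact sup_le hb1 hb2
  have hnB : ‖T x - T y‖ ≤ ‖B‖ := by
    refine norm_le_norm_of_abs_le_abs ?_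
    rwa [abs_of_nonneg hBnn]
  have hnB2 : ‖B‖ ≤ lam * (4 * M) := by
    rw [hB, norm_smul, Real.norm_eq_abs, abs_of_nonneg hlam0]
    refine mul_le_mul_of_nonneg_left ?_ hlam0
    have e1 : ‖T z1 - T x‖ ≤ 2 * M := by
      calc ‖T z1 - T x‖ ≤ ‖T z1‖ + ‖T x‖ := norm_sub_le _ _
        _ ≤ M + M := add_le_add (hM _ hz1c) (hM _ (hx.trans (by linarith)))
        _ = 2 * M := by ring
    have e2 : ‖T z2 - T y‖ ≤ 2 * M := by
      calc ‖T z2 - T y‖ ≤ ‖T z2‖ + ‖T y‖ := norm_sub_le _ _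
        _ ≤ M + M := add_le_add (hM _ hz2c) (hM _ (hy.trans (by linarith)))
        _ = 2 * M := by ring
    calc ‖|T z1 - T x| + |T z2 - T y|‖ ≤ ‖|T z1 - T x|‖ + ‖|T z2 - T y|‖ := norm_add_le _ _
      _ = ‖T z1 - T x‖ + ‖T z2 - T y‖ := by rw [norm_abs_eq_norm, norm_abs_eq_norm]
      _ ≤ 4 * M := by linarith
  have hfin : lam * (4 * M) ≤ (4 * M / r) * d := by
    have h : lam ≤ d / r := by
      rw [hlam]
      exact div_le_div_of_nonneg_left hd0.le hr (by rw [hs]; linarith)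
    calc lam * (4 * M) ≤ (d / r) * (4 * M) := by
          exact mul_le_mul_of_nonneg_right h (by positivity)
      _ = (4 * M / r) * d := by ring
  calc ‖T x - T y‖ ≤ ‖B‖ := hnB
    _ ≤ lam * (4 * M) := hnB2
    _ ≤ (4 * M / r) * d := hfin

end Aux

set_option maxHeartbeats 2000000 in
/-- For a convex C₀-semigroup `S` on a Banach lattice `X`, the orbit map
`t ↦ S(t)x` is continuous on `[0,∞)` for every `x ∈ X`. -/
theorem convex_semigroup_orbit_continuous
    {X : Type*} [NormedAddCommGroup X] [Lattice X] [HasSolidNorm X] [IsOrderedAddMonoid X]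
    [NormedSpace ℝ X] [CompleteSpace X]
    [PosSMulStrictMono ℝ X]
    (S : ℝ → X → X)
    (hconv : ∀ t : ℝ, 0 ≤ t → ∀ x y : X, ∀ a : ℝ, 0 ≤ a → a ≤ 1 →
      S t (a • x + (1 - a) • y) ≤ a • S t x + (1 - a) • S t y)
    (hbdd : ∀ t : ℝ, 0 ≤ t → ∀ r : ℝ, 0 < r → ∃ M : ℝ, ∀ x : X, ‖x‖ ≤ r → ‖S t x‖ ≤ M)
    (hid : ∀ x : X, S 0 x = x)
    (hsg : ∀ s t : ℝ, 0 ≤ s → 0 ≤ t → ∀ x : X, S (t + s) x = S t (S s x))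
    (hc0 : ∀ x : X, Tendsto (fun t : ℝ => S t x) (𝓝[>] (0 : ℝ)) (𝓝 x))
    (x : X) :
    ContinuousOn (fun t : ℝ => S t x) (Ici (0 : ℝ)) := by
  classical
  -- Step 1: each S t is continuous
  have contS : ∀ t : ℝ, 0 ≤ t → Continuous (S t) := by
    intro t ht
    rw [continuous_iff_continuousAt]
    intro c
    obtain ⟨M, hM⟩ := hbdd t ht (‖c‖ + 2) (by positivity)
    have hM' : ∀ w : X, ‖w - c‖ ≤ 2 * 1 → ‖S t w‖ ≤ M := by
      intro w hw
      refine hM w ?_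
      calc ‖w‖ = ‖(w - c) + c‖ := by rw [sub_add_cancel]
        _ ≤ ‖w - c‖ + ‖c‖ := norm_add_le _ _
        _ ≤ ‖c‖ + 2 := by linarith
    rw [Metric.continuousAt_iff]
    intro ε hε
    refine ⟨min 1 (ε / (4 * M / 1 + 1)), ?_, ?_⟩
    · have hM0 : 0 ≤ M := le_trans (norm_nonneg _) (hM' c (by norm_num))
      positivity
    · intro w hw
      rw [dist_eq_norm] at hw ⊢
      have hM0 : 0 ≤ M := le_trans (norm_nonneg _) (hM' c (by norm_num))
      have h1 : ‖w - c‖ ≤ 1 := le_of_lt (lt_of_lt_of_le hw (min_le_left _ _))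
      have := aux_lip (hconv t ht) one_pos hM' (x := w) (y := c) h1 (by norm_num)
      calc ‖S t w - S t c‖ ≤ (4 * M / 1) * ‖w - c‖ := this
        _ < (4 * M / 1 + 1) * (ε / (4 * M / 1 + 1)) := by
            have h2 : ‖w - c‖ < ε / (4 * M / 1 + 1) :=
              lt_of_lt_of_le hw (min_le_right _ _)
            have h3 : (0:ℝ) < 4 * M / 1 + 1 := by positivity
            nlinarith [norm_nonneg (w - c)]
        _ = ε := by field_simp
  -- Step 2: strong continuity within Ici 0
  have hc0' : ∀ w : X, Tendsto (fun t : ℝ => S t w) (𝓝[≥] (0:ℝ)) (𝓝 w) := by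
    intro w
    have hset : Ici (0:ℝ) = {0} ∪ Ioi 0 := by
      ext t
      simp only [mem_Ici, mem_union, mem_singleton_iff, mem_Ioi]
      constructor
      · intro h
        rcases eq_or_lt_of_le h with h | h
        exacts [Or.inl h.symm, Or.inr h]
      · rintro (rfl | h)
        exacts [le_refl _, le_of_lt h]
    rw [hset, nhdsWithin_union, tendsto_sup]
    constructor
    · rw [nhdsWithin_singleton]
      rw [tendsto_pure_left]
      intro s hs
      rw [hid w]
      exact mem_of_mem_nhds hs
    · exact hc0 w
  -- Step 3: right continuity of orbits
  have rc : ∀ u : ℝ, 0 ≤ u → ∀ w : X, Tendsto (fun s : ℝ => S s w) (𝓝[≥] u) (𝓝 (S u w)) := by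
    intro u hu w
    have hsub : Tendsto (fun s : ℝ => s - u) (𝓝[≥] u) (𝓝[≥] (0:ℝ)) := by
      apply tendsto_nhdsWithin_of_tendsto_nhds_of_eventually_within
      · have h0 : Tendsto (fun s : ℝ => s - u) (𝓝 u) (𝓝 (u - u)) :=
          (continuous_id.sub continuous_const).tendsto u
        rw [sub_self] at h0
        exact h0.mono_left nhdsWithin_le_nhds
      · filter_upwards [self_mem_nhdsWithin] with s hs
        simpa using hs
    have hcomp : Tendsto (fun s : ℝ => S u (S (s - u) w)) (𝓝[≥] u) (𝓝 (S u w)) :=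
      ((contS u hu).tendsto w).comp ((hc0' w).comp hsub)
    refine Tendsto.congr' ?_ hcomp
    filter_upwards [self_mem_nhdsWithin] with s hs
    have hsu : (0:ℝ) ≤ s - u := by simpa using hs
    have := hsg (s - u) u hsu hu w
    rw [add_sub_cancel] at this
    exact this.symm
  -- Step 4: pointwise bound near 0
  have ptb : ∀ w : X, ∃ δ : ℝ, 0 < δ ∧ ∀ u : ℝ, 0 ≤ u → u ≤ δ → ‖S u w‖ ≤ ‖w‖ + 1 := by
    intro w
    have hev : ∀ᶠ u in 𝓝[≥] (0:ℝ), S u w ∈ Metric.ball w 1 :=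
      (hc0' w).eventually (Metric.ball_mem_nhds w one_pos)
    rw [eventually_nhdsWithin_iff] at hev
    obtain ⟨ε, hε, hball⟩ := Metric.eventually_nhds_iff.mp hev
    refine ⟨ε / 2, by positivity, ?_⟩
    intro u hu huδ
    have h1 : dist u 0 < ε := by
      rw [Real.dist_eq, sub_zero, abs_of_nonneg hu]; linarith
    have h2 : S u w ∈ Metric.ball w 1 := hball h1 hu
    rw [Metric.mem_ball, dist_eq_norm] at h2
    calc ‖S u w‖ = ‖w + (S u w - w)‖ := by congr 1; abel
      _ ≤ ‖w‖ + ‖S u w - w‖ := norm_add_le _ _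
      _ ≤ ‖w‖ + 1 := by linarith
  -- Step 5: Baire category: uniform bound on some ball for small times
  obtain ⟨n, z₀, ρ, hρ, hEball⟩ :
      ∃ (n : ℕ) (z₀ : X) (ρ : ℝ), 0 < ρ ∧ ∀ w ∈ Metric.ball z₀ ρ, ∀ q : ℚ,
        0 ≤ (q:ℝ) → (q:ℝ) ≤ 1 / (n + 1) → ‖S (q:ℝ) w‖ ≤ n + 1 := by
    set E : ℕ → Set X := fun n =>
      {w | ∀ q : ℚ, 0 ≤ (q:ℝ) → (q:ℝ) ≤ 1 / (n + 1) → ‖S (q:ℝ) w‖ ≤ n + 1} with hE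
    have hEclosed : ∀ n, IsClosed (E n) := by
      intro n
      have : E n = ⋂ q : ℚ,
          {w : X | 0 ≤ (q:ℝ) → (q:ℝ) ≤ 1 / (n + 1) → ‖S (q:ℝ) w‖ ≤ n + 1} := by
        ext w; simp [hE, Set.mem_iInter]
      rw [this]
      refine isClosed_iInter fun q => ?_
      by_cases h1 : 0 ≤ (q:ℝ)
      · by_cases h2 : (q:ℝ) ≤ 1 / (n + 1)
        · have heq : {w : X | 0 ≤ (q:ℝ) → (q:ℝ) ≤ 1 / (n + 1) → ‖S (q:ℝ) w‖ ≤ n + 1}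
              = (fun w => ‖S (q:ℝ) w‖) ⁻¹' (Iic (n + 1)) := by
            ext w
            simp only [Set.mem_setOf_eq, Set.mem_preimage, Set.mem_Iic]
            exact ⟨fun h => h h1 h2, fun h _ _ => h⟩
          rw [heq]
          exact IsClosed.preimage (continuous_norm.comp (contS _ h1)) isClosed_Iic
        · have heq : {w : X | 0 ≤ (q:ℝ) → (q:ℝ) ≤ 1 / (n + 1) → ‖S (q:ℝ) w‖ ≤ n + 1}
              = univ := by
            ext w
            simp only [Set.mem_setOf_eq, Set.mem_univ, iff_true]
            intro _ hq
            exact absurd hq h2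
          rw [heq]; exact isClosed_univ
      · have heq : {w : X | 0 ≤ (q:ℝ) → (q:ℝ) ≤ 1 / (n + 1) → ‖S (q:ℝ) w‖ ≤ n + 1}
            = univ := by
          ext w
          simp only [Set.mem_setOf_eq, Set.mem_univ, iff_true]
          intro hq
          exact absurd hq h1
        rw [heq]; exact isClosed_univ
    have hEcover : ⋃ n, E n = univ := by
      rw [Set.eq_univ_iff_forall]
      intro w
      obtain ⟨δ, hδ, hb⟩ := ptb w
      obtain ⟨m, hm⟩ := exists_nat_ge (max ‖w‖ (1 / δ))
      rw [Set.mem_iUnion]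
      refine ⟨m, ?_⟩
      intro q hq1 hq2
      have hmw : ‖w‖ ≤ m := le_trans (le_max_left _ _) hm
      have hmd : 1 / δ ≤ m := le_trans (le_max_right _ _) hm
      have hqδ : (q:ℝ) ≤ δ := by
        refine le_trans hq2 ?_
        rw [div_le_iff₀ (by positivity)]
        rw [div_le_iff₀ hδ] at hmd
        calc (1:ℝ) ≤ m * δ := hmd
          _ ≤ δ * (m + 1) := by nlinarith [hδ.le]
      exact le_trans (hb q hq1 hqδ) (by push_cast; linarith)
    obtain ⟨n, hn⟩ := nonempty_interior_of_iUnion_of_closed hEclosed hEcover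
    obtain ⟨z₀, hz₀⟩ := hn
    rw [mem_interior_iff_mem_nhds, Metric.mem_nhds_iff] at hz₀
    obtain ⟨ρ, hρ, hball⟩ := hz₀
    exact ⟨n, z₀, ρ, hρ, fun w hw => hball hw⟩
  -- Step 6: extend the uniform bound to all small real times
  have hb1 : ∀ u : ℝ, 0 ≤ u → u < 1 / (n + 1) → ∀ w ∈ Metric.ball z₀ ρ,
      ‖S u w‖ ≤ n + 1 := by
    intro u hu hun w hw
    refine le_of_forall_pos_le_add ?_
    intro ε hε
    have hrc : Tendsto (fun s : ℝ => S s w) (𝓝[>] u) (𝓝 (S u w)) :=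
      (rc u hu w).mono_left (nhdsWithin_mono _ (fun s hs => mem_Ici.2 (le_of_lt hs)))
    have hev : ∀ᶠ s in 𝓝[>] u, S s w ∈ Metric.ball (S u w) ε :=
      hrc.eventually (Metric.ball_mem_nhds _ hε)
    obtain ⟨b, hb, hsub⟩ := mem_nhdsGT_iff_exists_Ioo_subset.mp hev
    have hub : u < min b (1 / (n + 1)) := lt_min hb hun
    obtain ⟨q, hq1, hq2⟩ := exists_rat_btwn hub
    have hq0 : 0 ≤ (q:ℝ) := le_trans hu (le_of_lt hq1)
    have hqE : ‖S (q:ℝ) w‖ ≤ n + 1 :=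
      hEball w hw q hq0 (le_of_lt (lt_of_lt_of_le hq2 (min_le_right _ _)))
    have hdist : S (q:ℝ) w ∈ Metric.ball (S u w) ε :=
      hsub ⟨hq1, lt_of_lt_of_le hq2 (min_le_left _ _)⟩
    rw [Metric.mem_ball, dist_eq_norm] at hdist
    calc ‖S u w‖ = ‖S (q:ℝ) w - (S (q:ℝ) w - S u w)‖ := by congr 1; abel
      _ ≤ ‖S (q:ℝ) w‖ + ‖S (q:ℝ) w - S u w‖ := norm_sub_le _ _
      _ ≤ (n + 1) + ε := add_le_add hqE (le_of_lt hdist)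
  -- Step 7: uniform bound on a ball around x for small times
  set p : X := x + x - z₀ with hpdef
  set q' : X := z₀ + z₀ - x with hq'def
  obtain ⟨δp, hδp, hpb⟩ := ptb p
  obtain ⟨δq, hδq, hqb⟩ := ptb q'
  set δstar : ℝ := min (min δp δq) (1 / (2 * (n + 1))) with hδstardef
  have hδstar : 0 < δstar := by
    refine lt_min (lt_min hδp hδq) ?_
    positivity
  set M0 : ℝ := 3 * (n + 1) + ‖p‖ + ‖q'‖ + 2 with hM0def
  have hM0pos : 0 < M0 := by positivity
  have hbound : ∀ u : ℝ, 0 ≤ u → u ≤ δstar → ∀ w : X, ‖w - x‖ ≤ ρ / 4 →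
      ‖S u w‖ ≤ M0 := by
    intro u hu huδ w hwx
    have hu1 : u < 1 / (n + 1) := by
      have h1 : u ≤ 1 / (2 * (n + 1)) := le_trans huδ (min_le_right _ _)
      have h2 : (1:ℝ) / (2 * (n + 1)) < 1 / (n + 1) := by
        rw [div_lt_div_iff₀ (by positivity) (by positivity)]
        nlinarith [Nat.cast_nonneg (α := ℝ) n]
      linarith
    have hup : u ≤ δp := le_trans huδ (le_trans (min_le_left _ _) (min_le_left _ _))
    have huq : u ≤ δq := le_trans huδ (le_trans (min_le_left _ _) (min_le_right _ _))
    -- upper bound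
    set v : X := w + w - p with hvdef
    have hv : v ∈ Metric.ball z₀ ρ := by
      rw [Metric.mem_ball, dist_eq_norm]
      have hveq : v - z₀ = (w - x) + (w - x) := by rw [hvdef, hpdef]; abel
      rw [hveq]
      calc ‖(w - x) + (w - x)‖ ≤ ‖w - x‖ + ‖w - x‖ := norm_add_le _ _
        _ ≤ ρ / 4 + ρ / 4 := add_le_add hwx hwx
        _ < ρ := by linarith
    have hwid : (1/2 : ℝ) • v + (1 - 1/2 : ℝ) • p = w := by
      rw [hvdef]
      module
    have hU : S u w ≤ (1/2 : ℝ) • S u v + (1 - 1/2 : ℝ) • S u p := by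
      have := hconv u hu v p (1/2) (by norm_num) (by norm_num)
      rwa [hwid] at this
    -- lower bound
    set m : X := (1/2 : ℝ) • w + (1 - 1/2 : ℝ) • q' with hmdef
    have hm : m ∈ Metric.ball z₀ ρ := by
      rw [Metric.mem_ball, dist_eq_norm]
      have hmeq : m - z₀ = (1/2 : ℝ) • (w - x) := by
        rw [hmdef, hq'def]
        module
      rw [hmeq, norm_smul, Real.norm_eq_abs]
      have : |(1/2 : ℝ)| = 1/2 := by norm_num
      rw [this]
      nlinarith [norm_nonneg (w - x)]
    have hLle : (2 : ℝ) • S u m - S u q' ≤ S u w := by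
      have hL := hconv u hu w q' (1/2) (by norm_num) (by norm_num)
      rw [← hmdef] at hL
      have h2 : (2 : ℝ) • S u m ≤ (2 : ℝ) • ((1/2 : ℝ) • S u w + (1 - 1/2 : ℝ) • S u q') :=
        smul_le_smul_of_nonneg_left hL (by norm_num)
      have h3 : (2 : ℝ) • ((1/2 : ℝ) • S u w + (1 - 1/2 : ℝ) • S u q') = S u w + S u q' := by
        module
      rw [h3] at h2
      exact sub_le_iff_le_add.mpr h2
    -- sandwich
    have hnorm := aux_sandwich_norm hLle hU
    have hUb : ‖(1/2 : ℝ) • S u v + (1 - 1/2 : ℝ) • S u p‖ ≤ (1/2) * (n + 1) + (1/2) * (‖p‖ + 1) := by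
      calc ‖(1/2 : ℝ) • S u v + (1 - 1/2 : ℝ) • S u p‖
          ≤ ‖(1/2 : ℝ) • S u v‖ + ‖(1 - 1/2 : ℝ) • S u p‖ := norm_add_le _ _
        _ = (1/2) * ‖S u v‖ + (1/2) * ‖S u p‖ := by
            rw [norm_smul, norm_smul, Real.norm_eq_abs, Real.norm_eq_abs,
              abs_of_nonneg (by norm_num : (0:ℝ) ≤ 1/2),
              abs_of_nonneg (by norm_num : (0:ℝ) ≤ 1 - 1/2)]
            norm_num
        _ ≤ (1/2) * (n + 1) + (1/2) * (‖p‖ + 1) := by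
            have h1 := hb1 u hu hu1 v hv
            have h2 := hpb u hu hup
            have := norm_nonneg (S u v)
            nlinarith
    have hLb : ‖(2 : ℝ) • S u m - S u q'‖ ≤ 2 * (n + 1) + (‖q'‖ + 1) := by
      calc ‖(2 : ℝ) • S u m - S u q'‖ ≤ ‖(2 : ℝ) • S u m‖ + ‖S u q'‖ := norm_sub_le _ _
        _ = 2 * ‖S u m‖ + ‖S u q'‖ := by
            rw [norm_smul, Real.norm_eq_abs, abs_of_nonneg (by norm_num : (0:ℝ) ≤ 2)]
        _ ≤ 2 * (n + 1) + (‖q'‖ + 1) := by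
            have h1 := hb1 u hu hu1 m hm
            have h2 := hqb u hu huq
            linarith
    rw [hM0def]
    calc ‖S u w‖ ≤ ‖(2 : ℝ) • S u m - S u q'‖
          + ‖(1/2 : ℝ) • S u v + (1 - 1/2 : ℝ) • S u p‖ := hnorm
      _ ≤ (2 * (n + 1) + (‖q'‖ + 1)) + ((1/2) * (n + 1) + (1/2) * (‖p‖ + 1)) := by
          linarith
      _ ≤ 3 * (n + 1) + ‖p‖ + ‖q'‖ + 2 := by
          have := Nat.cast_nonneg (α := ℝ) n
          have := norm_nonneg p
          linarith
  -- Step 8: uniform Lipschitz bound for small times on a small ball around x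
  set L : ℝ := 4 * M0 / (ρ / 8) with hLdef
  have hL0 : 0 ≤ L := by positivity
  have hLip : ∀ u : ℝ, 0 ≤ u → u ≤ δstar → ∀ w1 w2 : X,
      ‖w1 - x‖ ≤ ρ / 8 → ‖w2 - x‖ ≤ ρ / 8 → ‖S u w1 - S u w2‖ ≤ L * ‖w1 - w2‖ := by
    intro u hu huδ w1 w2 h1 h2
    refine aux_lip (hconv u hu) (by positivity : (0:ℝ) < ρ / 8) ?_ h1 h2
    intro w hw
    exact hbound u hu huδ w (by linarith)
  -- Step 9: continuity of the orbit on [0, δstar]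
  have key : ContinuousOn (fun t : ℝ => S t x) (Icc 0 δstar) := by
    intro u₀ hu₀
    obtain ⟨hu₀0, hu₀δ⟩ := hu₀
    rw [ContinuousWithinAt]
    have hsplit : Icc (0:ℝ) δstar = Icc 0 u₀ ∪ Icc u₀ δstar :=
      (Icc_union_Icc_eq_Icc hu₀0 hu₀δ).symm
    rw [hsplit, nhdsWithin_union, tendsto_sup]
    constructor
    · -- left continuity
      rw [Metric.tendsto_nhdsWithin_nhds]
      intro ε hε
      have hεL : 0 < min (ρ / 8) (ε / (L + 1)) := by positivity
      obtain ⟨δ₀, hδ₀, hδ₀'⟩ := Metric.tendsto_nhdsWithin_nhds.mp (hc0' x) _ hεL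
      refine ⟨δ₀, hδ₀, ?_⟩
      intro s hs hd
      have hh0 : 0 ≤ u₀ - s := by linarith [hs.2]
      have hhδ : dist (u₀ - s) 0 < δ₀ := by
        rw [Real.dist_eq, sub_zero, abs_of_nonneg hh0]
        rw [Real.dist_eq] at hd
        rw [abs_sub_comm] at hd
        calc u₀ - s ≤ |u₀ - s| := le_abs_self _
          _ < δ₀ := hd
      have hSh := hδ₀' (mem_Ici.2 hh0) hhδ
      rw [dist_eq_norm] at hSh
      have hkey : S u₀ x = S s (S (u₀ - s) x) := by
        have h := hsg (u₀ - s) s hh0 hs.1 x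
        have h2 : s + (u₀ - s) = u₀ := by ring
        rwa [h2] at h
      rw [dist_eq_norm, hkey]
      have hx1 : ‖x - x‖ ≤ ρ / 8 := by simp; positivity
      have hx2 : ‖S (u₀ - s) x - x‖ ≤ ρ / 8 :=
        le_trans (le_of_lt hSh) (min_le_left _ _)
      have hlip := hLip s hs.1 (le_trans hs.2 hu₀δ) x (S (u₀ - s) x) hx1 hx2
      have hxn : ‖x - S (u₀ - s) x‖ ≤ ε / (L + 1) := by
        rw [norm_sub_rev]
        exact le_trans (le_of_lt hSh) (min_le_right _ _)
      calc ‖S s x - S s (S (u₀ - s) x)‖ ≤ L * ‖x - S (u₀ - s) x‖ := hlip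
        _ ≤ L * (ε / (L + 1)) := mul_le_mul_of_nonneg_left hxn hL0
        _ < ε := by
            rw [mul_div_assoc']
            rw [div_lt_iff₀ (by positivity)]
            nlinarith
    · -- right continuity
      exact (rc u₀ hu₀0 x).mono_left (nhdsWithin_mono _ (fun s hs => hs.1))
  -- Step 10: assembly
  intro t₀ ht₀
  rw [mem_Ici] at ht₀
  by_cases hcase : t₀ < δstar
  · have h1 : ContinuousWithinAt (fun t : ℝ => S t x) (Icc 0 δstar) t₀ :=
      key t₀ ⟨ht₀, le_of_lt hcase⟩
    refine h1.mono_of_mem_nhdsWithin ?_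
    have hIcc : Icc (0:ℝ) δstar = Ici 0 ∩ Iic δstar := (Ici_inter_Iic).symm
    rw [hIcc]
    exact inter_mem_nhdsWithin _ (Iic_mem_nhds hcase)
  · push_neg at hcase
    set c : ℝ := t₀ - δstar / 2 with hcdef
    have hc : 0 ≤ c := by
      rw [hcdef]; linarith
    have hinner : ContinuousAt (fun u : ℝ => S u x) (δstar / 2) := by
      refine key.continuousAt ?_
      exact Icc_mem_nhds (by positivity) (by linarith)
    have hinner2 : ContinuousAt (fun t : ℝ => S (t - c) x) t₀ := by
      have hsub : ContinuousAt (fun t : ℝ => t - c) t₀ :=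
        (continuous_id.sub continuous_const).continuousAt
      have hval : t₀ - c = δstar / 2 := by rw [hcdef]; ring
      have h5 : ContinuousAt (fun u : ℝ => S u x) (t₀ - c) := by rwa [hval]
      exact ContinuousAt.comp (g := fun u : ℝ => S u x) (f := fun t : ℝ => t - c) h5 hsub
    have houter : ContinuousAt (fun t : ℝ => S c (S (t - c) x)) t₀ :=
      ((contS c hc).continuousAt).comp hinner2
    have heq : (fun t : ℝ => S c (S (t - c) x)) =ᶠ[𝓝 t₀] (fun t : ℝ => S t x) := by
      have hmem : Ioi c ∈ 𝓝 t₀ := Ioi_mem_nhds (by rw [hcdef]; linarith)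
      filter_upwards [hmem] with t ht
      rw [mem_Ioi] at ht
      have h := hsg (t - c) c (by linarith) hc x
      have h2 : c + (t - c) = t := by ring
      rw [h2] at h
      exact h.symm
    exact (ContinuousAt.congr houter heq).continuousWithinAt
end

section
/- Let X be a Banach lattice and let S = (S(t))_{t≥0} be a convex C₀-semigroup on X. Let x ∈ X be such that sup_{h∈(0,h₀]} ‖(S(h)x − x)/h‖ < ∞ for some h₀ > 0. Then the map [0,∞) → X, t ↦ S(t)x, is locally Lipschitz continuous: for every T > 0 there exists L_T ≥ 0 such that ‖S(t)x − S(s)x‖ ≤ L_T |t − s| for all s,t ∈ [0,T]. -/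
open Filter Topology Set

section aux
set_option linter.unusedSectionVars false
variable {X : Type*} [NormedAddCommGroup X] [Lattice X] [HasSolidNorm X] [IsOrderedAddMonoid X] [NormedSpace ℝ X]

lemma myNorm_posPart_le (a : X) : ‖a⁺‖ ≤ ‖a‖ := by
  apply HasSolidNorm.solid
  rw [abs_of_nonneg (posPart_nonneg a), posPart_def]
  exact sup_le (le_abs_self a) (abs_nonneg a)

lemma myPosPart_mono {a b : X} (h : a ≤ b) : a⁺ ≤ b⁺ := by
  rw [posPart_def, posPart_def]; exact sup_le_sup_right h 0

lemma myNorm_posPart_le_of_le {a b : X} (h : a ≤ b) : ‖a⁺‖ ≤ ‖b‖ := by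
  refine le_trans ?_ (myNorm_posPart_le b)
  apply HasSolidNorm.solid
  rw [abs_of_nonneg (posPart_nonneg a), abs_of_nonneg (posPart_nonneg b)]
  exact myPosPart_mono h

/-- one-sided Lipschitz estimate for a convex operator bounded on a ball -/
lemma convex_lip_half (Φ : X → X)
    (hΦ : ∀ u v : X, ∀ a : ℝ, 0 ≤ a → a ≤ 1 → Φ (a • u + (1-a) • v) ≤ a • Φ u + (1-a) • Φ v)
    (x₀ : X) (R C ρ : ℝ) (hρ : 0 < ρ)
    (hC : ∀ p : X, ‖p - x₀‖ ≤ R + ρ → ‖Φ p‖ ≤ C)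
    (hRρ : 0 ≤ R)
    (u v : X) (hu : ‖u - x₀‖ ≤ R) (hv : ‖v - x₀‖ ≤ R) :
    ‖(Φ u - Φ v)⁺‖ ≤ (2 * C / ρ) * ‖u - v‖ := by
  have hCv : ‖Φ v‖ ≤ C := hC v (hv.trans (by linarith))
  have hC0 : 0 ≤ C := (norm_nonneg _).trans hCv
  set d := ‖u - v‖ with hd
  have hd0 : 0 ≤ d := norm_nonneg _
  rcases eq_or_lt_of_le hd0 with hd0' | hdpos
  · -- u = v
    have huv : u = v := by
      have h' : ‖u - v‖ = 0 := by rw [← hd, ← hd0']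
      exact sub_eq_zero.mp (norm_eq_zero.mp h')
    rw [huv, sub_self]
    have h1 : ((0:X))⁺ = 0 := by simp
    rw [h1, norm_zero]
    exact mul_nonneg (div_nonneg (by positivity) hρ.le) hd0
  · have hdρ : 0 < d + ρ := by linarith
    set lam := d / (d + ρ) with hlam
    have hlam0 : 0 ≤ lam := div_nonneg hd0 hdρ.le
    have hlam1 : lam ≤ 1 := by
      rw [hlam, div_le_one hdρ]; linarith
    set w := u + (ρ / d) • (u - v) with hw
    have hwball : ‖w - x₀‖ ≤ R + ρ := by
      have : w - x₀ = (u - x₀) + (ρ / d) • (u - v) := by rw [hw]; abel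
      rw [this]
      refine (norm_add_le _ _).trans ?_
      rw [norm_smul, Real.norm_eq_abs, abs_of_nonneg (div_nonneg hρ.le hd0), ← hd]
      rw [div_mul_cancel₀ _ (ne_of_gt hdpos)]
      linarith
    have hkey : u = lam • w + (1 - lam) • v := by
      have h1 : (1 : ℝ) - lam = ρ / (d + ρ) := by
        rw [hlam]; field_simp; ring
      have h2 : lam * (ρ / d) = ρ / (d + ρ) := by
        rw [hlam]; field_simp
      rw [hw, smul_add, smul_smul, h2, h1]
      rw [smul_sub]
      have h3 : lam + ρ / (d + ρ) = 1 := by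
        rw [hlam]; field_simp
      calc u = (lam + ρ / (d+ρ)) • u := by rw [h3, one_smul]
        _ = lam • u + ((ρ/(d+ρ)) • u - (ρ/(d+ρ)) • v) + (ρ/(d+ρ)) • v := by
            rw [add_smul]; abel
    have hconv1 : Φ u ≤ lam • Φ w + (1 - lam) • Φ v := by
      calc Φ u = Φ (lam • w + (1 - lam) • v) := by rw [← hkey]
        _ ≤ lam • Φ w + (1 - lam) • Φ v := hΦ w v lam hlam0 hlam1
    have hdiff : Φ u - Φ v ≤ lam • (Φ w - Φ v) := by
      rw [smul_sub]
      have : lam • Φ w + (1 - lam) • Φ v - Φ v = lam • Φ w - lam • Φ v := by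
        rw [sub_smul, one_smul]; abel
      calc Φ u - Φ v ≤ lam • Φ w + (1 - lam) • Φ v - Φ v := by
            exact sub_le_sub_right hconv1 _
        _ = lam • Φ w - lam • Φ v := this
    calc ‖(Φ u - Φ v)⁺‖ ≤ ‖lam • (Φ w - Φ v)‖ := myNorm_posPart_le_of_le hdiff
      _ = lam * ‖Φ w - Φ v‖ := by
          rw [norm_smul, Real.norm_eq_abs, abs_of_nonneg hlam0]
      _ ≤ lam * (2 * C) := by
          refine mul_le_mul_of_nonneg_left ?_ hlam0
          calc ‖Φ w - Φ v‖ ≤ ‖Φ w‖ + ‖Φ v‖ := norm_sub_le _ _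
            _ ≤ 2 * C := by have := hC w hwball; linarith
      _ ≤ (2 * C / ρ) * d := by
          rw [hlam]
          rw [div_mul_eq_mul_div, div_mul_eq_mul_div, div_le_div_iff₀ hdρ hρ]
          nlinarith [mul_nonneg (mul_nonneg hC0 hd0) hd0]

lemma myNorm_le_of_sandwich {a v c : X} (h1 : a ≤ v) (h2 : v ≤ c) : ‖v‖ ≤ ‖a‖ + ‖c‖ := by
  have h3 : v⁻ = (-v)⁺ := by rw [negPart_def, posPart_def]
  have h4 : ‖v⁺‖ ≤ ‖c‖ := myNorm_posPart_le_of_le h2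
  have h5 : ‖v⁻‖ ≤ ‖a‖ := by
    rw [h3]
    refine le_trans (myNorm_posPart_le_of_le (neg_le_neg h1)) (norm_neg a).le
  calc ‖v‖ = ‖v⁺ - v⁻‖ := by rw [posPart_sub_negPart]
    _ ≤ ‖v⁺‖ + ‖v⁻‖ := norm_sub_le _ _
    _ ≤ ‖c‖ + ‖a‖ := add_le_add h4 h5
    _ = ‖a‖ + ‖c‖ := by ring

lemma convex_lip (Φ : X → X)
    (hΦ : ∀ u v : X, ∀ a : ℝ, 0 ≤ a → a ≤ 1 → Φ (a • u + (1-a) • v) ≤ a • Φ u + (1-a) • Φ v)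
    (x₀ : X) (R C ρ : ℝ) (hρ : 0 < ρ)
    (hC : ∀ p : X, ‖p - x₀‖ ≤ R + ρ → ‖Φ p‖ ≤ C)
    (hR : 0 ≤ R)
    (u v : X) (hu : ‖u - x₀‖ ≤ R) (hv : ‖v - x₀‖ ≤ R) :
    ‖Φ u - Φ v‖ ≤ (4 * C / ρ) * ‖u - v‖ := by
  have h1 := convex_lip_half Φ hΦ x₀ R C ρ hρ hC hR u v hu hv
  have h2 := convex_lip_half Φ hΦ x₀ R C ρ hρ hC hR v u hv hu
  rw [norm_sub_rev v u] at h2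
  have hneg : (Φ u - Φ v)⁻ = (Φ v - Φ u)⁺ := by
    rw [negPart_def, posPart_def, neg_sub]
  calc ‖Φ u - Φ v‖ = ‖(Φ u - Φ v)⁺ - (Φ u - Φ v)⁻‖ := by rw [posPart_sub_negPart]
    _ ≤ ‖(Φ u - Φ v)⁺‖ + ‖(Φ u - Φ v)⁻‖ := norm_sub_le _ _
    _ = ‖(Φ u - Φ v)⁺‖ + ‖(Φ v - Φ u)⁺‖ := by rw [hneg]
    _ ≤ (2 * C / ρ) * ‖u - v‖ + (2 * C / ρ) * ‖u - v‖ := add_le_add h1 h2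
    _ = (4 * C / ρ) * ‖u - v‖ := by ring

lemma convex_continuous (Φ : X → X)
    (hΦ : ∀ u v : X, ∀ a : ℝ, 0 ≤ a → a ≤ 1 → Φ (a • u + (1-a) • v) ≤ a • Φ u + (1-a) • Φ v)
    (hb : ∀ r : ℝ, 0 < r → ∃ M : ℝ, ∀ x : X, ‖x‖ ≤ r → ‖Φ x‖ ≤ M) :
    Continuous Φ := by
  rw [continuous_iff_continuousAt]
  intro y
  obtain ⟨C, hC⟩ := hb (‖y‖ + 2) (by positivity)
  have hC0 : 0 ≤ C := (norm_nonneg _).trans (hC y (by linarith))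
  have hlip : ∀ u v : X, ‖u - y‖ ≤ 1 → ‖v - y‖ ≤ 1 → ‖Φ u - Φ v‖ ≤ (4 * C / 1) * ‖u - v‖ := by
    intro u v hu hv
    refine convex_lip Φ hΦ y 1 C 1 one_pos ?_ zero_le_one u v hu hv
    intro p hp
    refine hC p ?_
    calc ‖p‖ = ‖(p - y) + y‖ := by rw [sub_add_cancel]
      _ ≤ ‖p - y‖ + ‖y‖ := norm_add_le _ _
      _ ≤ ‖y‖ + 2 := by linarith
  rw [Metric.continuousAt_iff]
  intro ε hε
  refine ⟨min 1 (ε / (4 * C + 1)), by positivity, ?_⟩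
  intro z hz
  rw [dist_eq_norm] at hz ⊢
  have hz1 : ‖z - y‖ ≤ 1 := le_of_lt (lt_of_lt_of_le hz (min_le_left _ _))
  have hz2 : ‖z - y‖ < ε / (4 * C + 1) := lt_of_lt_of_le hz (min_le_right _ _)
  have h := hlip z y hz1 (by simp)
  calc ‖Φ z - Φ y‖ ≤ (4 * C / 1) * ‖z - y‖ := h
    _ ≤ (4 * C + 1) * ‖z - y‖ := by
        apply mul_le_mul_of_nonneg_right (by linarith) (norm_nonneg _)
    _ < (4 * C + 1) * (ε / (4 * C + 1)) := by
        apply mul_lt_mul_of_pos_left hz2 (by linarith)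
    _ = ε := by field_simp

end aux

/-- If the difference quotients `(S(h)x − x)/h` are bounded for `h ∈ (0,h₀]`,
then the orbit `t ↦ S(t)x` of the convex C₀-semigroup `S` is locally Lipschitz on `[0,∞)`. -/
theorem convex_semigroup_orbit_locally_lipschitz
    {X : Type*} [NormedAddCommGroup X] [Lattice X] [HasSolidNorm X] [IsOrderedAddMonoid X]
    [NormedSpace ℝ X] [CompleteSpace X]
    [PosSMulStrictMono ℝ X]
    (S : ℝ → X → X)
    (hconv : ∀ t : ℝ, 0 ≤ t → ∀ x y : X, ∀ a : ℝ, 0 ≤ a → a ≤ 1 →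
      S t (a • x + (1 - a) • y) ≤ a • S t x + (1 - a) • S t y)
    (hbdd : ∀ t : ℝ, 0 ≤ t → ∀ r : ℝ, 0 < r → ∃ M : ℝ, ∀ x : X, ‖x‖ ≤ r → ‖S t x‖ ≤ M)
    (hid : ∀ x : X, S 0 x = x)
    (hsg : ∀ s t : ℝ, 0 ≤ s → 0 ≤ t → ∀ x : X, S (t + s) x = S t (S s x))
    (hc0 : ∀ x : X, Tendsto (fun t : ℝ => S t x) (𝓝[>] (0 : ℝ)) (𝓝 x))
    (x : X) (h₀ : ℝ) (hh₀ : 0 < h₀) (M : ℝ)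
    (hquot : ∀ h : ℝ, h ∈ Ioc (0 : ℝ) h₀ → ‖h⁻¹ • (S h x - x)‖ ≤ M) :
    ∀ T : ℝ, 0 < T → ∃ L : ℝ, 0 ≤ L ∧
      ∀ s t : ℝ, s ∈ Icc (0 : ℝ) T → t ∈ Icc (0 : ℝ) T →
        ‖S t x - S s x‖ ≤ L * |t - s| := by
  intro T hT
  -- basic facts
  have hM0 : 0 ≤ M := le_trans (norm_nonneg _) (hquot h₀ ⟨hh₀, le_refl _⟩)
  have hdquot : ∀ h : ℝ, 0 < h → h ≤ h₀ → ‖S h x - x‖ ≤ M * h := by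
    intro h hh hh'
    have h1 := hquot h ⟨hh, hh'⟩
    rw [norm_smul, Real.norm_eq_abs, abs_inv, abs_of_pos hh] at h1
    calc ‖S h x - x‖ = h * (h⁻¹ * ‖S h x - x‖) := by field_simp
      _ ≤ h * M := mul_le_mul_of_nonneg_left h1 hh.le
      _ = M * h := by ring
  -- Step A: pointwise orbit boundedness on [0, T]
  have orbitBdd : ∀ y : X, ∃ K : ℝ, ∀ t : ℝ, 0 ≤ t → t ≤ T → ‖S t y‖ ≤ K := by
    intro y
    obtain ⟨δ, hδpos, hδ⟩ := Metric.tendsto_nhdsWithin_nhds.mp (hc0 y) 1 one_pos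
    set δ' := δ / 2 with hδ'def
    have hδ'pos : 0 < δ' := by positivity
    have hbase : ∀ t : ℝ, 0 ≤ t → t ≤ δ' → ‖S t y‖ ≤ ‖y‖ + 1 := by
      intro t ht htδ
      rcases eq_or_lt_of_le ht with h0 | h0
      · rw [← h0, hid]; linarith
      · have h1 : dist t 0 < δ := by
          rw [Real.dist_eq, sub_zero, abs_of_pos h0]
          linarith
        have h2 := hδ (mem_Ioi.mpr h0) h1
        rw [dist_eq_norm] at h2
        calc ‖S t y‖ = ‖(S t y - y) + y‖ := by rw [sub_add_cancel]
          _ ≤ ‖S t y - y‖ + ‖y‖ := norm_add_le _ _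
          _ ≤ ‖y‖ + 1 := by linarith
    have hind : ∀ N : ℕ, ∃ K : ℝ, ∀ t : ℝ, 0 ≤ t → t ≤ ((N : ℝ) + 1) * δ' → ‖S t y‖ ≤ K := by
      intro N
      induction N with
      | zero =>
        refine ⟨‖y‖ + 1, fun t ht htu => hbase t ht ?_⟩
        simpa using htu
      | succ m ih =>
        obtain ⟨K, hK⟩ := ih
        obtain ⟨M', hM'⟩ := hbdd (((m : ℝ) + 1) * δ') (by positivity) (‖y‖ + 2) (by positivity)
        refine ⟨max K M', fun t ht htu => ?_⟩
        by_cases hcase : t ≤ ((m : ℝ) + 1) * δ'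
        · exact (hK t ht hcase).trans (le_max_left _ _)
        · push_neg at hcase
          set u := t - ((m : ℝ) + 1) * δ' with hudef
          have hu0 : 0 ≤ u := by simp only [hudef]; linarith
          have huδ : u ≤ δ' := by
            simp only [hudef]
            push_cast at htu
            linarith
          have heq : S t y = S (((m : ℝ) + 1) * δ') (S u y) := by
            have h3 := hsg u (((m : ℝ) + 1) * δ') hu0 (by positivity) y
            have h4 : ((m : ℝ) + 1) * δ' + u = t := by simp only [hudef]; ring
            rw [h4] at h3
            exact h3
          rw [heq]
          refine le_trans (hM' _ ?_) (le_max_right _ _)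
          exact (hbase u hu0 huδ).trans (by linarith)
    obtain ⟨N, hN⟩ := exists_nat_ge (T / δ')
    obtain ⟨K, hK⟩ := hind N
    refine ⟨K, fun t ht htT => hK t ht ?_⟩
    have : T ≤ (N : ℝ) * δ' := by
      rw [div_le_iff₀ hδ'pos] at hN
      linarith
    nlinarith [hδ'pos]
  -- Step B: Baire category: uniform bound on a ball
  have hcont : ∀ t : ℝ, 0 ≤ t → Continuous (S t) := fun t ht =>
    convex_continuous (S t) (fun u v a ha ha' => hconv t ht u v a ha ha') (hbdd t ht)
  set F : ℕ → Set X := fun n => {y | ∀ t : ℝ, 0 ≤ t → t ≤ T → ‖S t y‖ ≤ n} with hFdef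
  have hclosed : ∀ n, IsClosed (F n) := by
    intro n
    have : F n = ⋂ (t : ℝ), ⋂ (_ : 0 ≤ t), ⋂ (_ : t ≤ T),
        (fun y => ‖S t y‖) ⁻¹' (Iic (n : ℝ)) := by
      ext y
      simp [hFdef, Set.mem_iInter]
    rw [this]
    exact isClosed_iInter fun t => isClosed_iInter fun ht => isClosed_iInter fun htT =>
      IsClosed.preimage ((hcont t ht).norm) isClosed_Iic
  have hunion : (⋃ n, F n) = univ := by
    rw [eq_univ_iff_forall]
    intro y
    obtain ⟨K, hK⟩ := orbitBdd y
    refine mem_iUnion.mpr ⟨⌈max K 0⌉₊, fun t ht htT => ?_⟩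
    calc ‖S t y‖ ≤ K := hK t ht htT
      _ ≤ max K 0 := le_max_left _ _
      _ ≤ (⌈max K 0⌉₊ : ℝ) := Nat.le_ceil _
  obtain ⟨n, hn⟩ := nonempty_interior_of_iUnion_of_closed hclosed hunion
  obtain ⟨y₀, hy₀⟩ := hn
  rw [mem_interior_iff_mem_nhds, Metric.mem_nhds_iff] at hy₀
  obtain ⟨ε, hε, hball⟩ := hy₀
  have hFn : ∀ y : X, ‖y - y₀‖ < ε → ∀ t : ℝ, 0 ≤ t → t ≤ T → ‖S t y‖ ≤ n := by
    intro y hy t ht htT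
    have : y ∈ F n := hball (by rwa [Metric.mem_ball, dist_eq_norm])
    exact this t ht htT
  -- Step C: transfer the uniform bound to a ball around x
  set w₀ := (2 : ℝ) • x - y₀ with hw₀def
  set q₀ := (2 : ℝ) • y₀ - x with hq₀def
  obtain ⟨Kw, hKw⟩ := orbitBdd w₀
  obtain ⟨Kq, hKq⟩ := orbitBdd q₀
  set Cs := (2 * (n : ℝ) + Kq) + (Kw / 2 + (n : ℝ) / 2) with hCsdef
  have hCstar : ∀ t : ℝ, 0 ≤ t → t ≤ T → ∀ y : X, ‖y - x‖ ≤ ε / 4 → ‖S t y‖ ≤ Cs := by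
    intro t ht htT y hy
    -- upper bound
    set b := (2 : ℝ) • y - w₀ with hbdef
    have hbball : ‖b - y₀‖ < ε := by
      have h1 : b - y₀ = (2 : ℝ) • (y - x) := by
        simp only [hbdef, hw₀def]; module
      rw [h1, norm_smul, Real.norm_eq_abs]
      rw [abs_of_nonneg (by norm_num : (0:ℝ) ≤ 2)]
      linarith
    have hyrep : y = (1/2 : ℝ) • w₀ + (1 - (1/2 : ℝ)) • b := by
      simp only [hbdef]; module
    have hupper : S t y ≤ (1/2 : ℝ) • S t w₀ + (1 - (1/2 : ℝ)) • S t b := by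
      nth_rewrite 1 [hyrep]
      exact hconv t ht w₀ b (1/2) (by norm_num) (by norm_num)
    have hcnorm : ‖(1/2 : ℝ) • S t w₀ + (1 - (1/2 : ℝ)) • S t b‖ ≤ Kw / 2 + (n : ℝ) / 2 := by
      refine (norm_add_le _ _).trans ?_
      rw [norm_smul, norm_smul, Real.norm_eq_abs, Real.norm_eq_abs]
      rw [abs_of_nonneg (by norm_num : (0:ℝ) ≤ 1/2), abs_of_nonneg (by norm_num : (0:ℝ) ≤ 1 - 1/2)]
      have h2 := hKw t ht htT
      have h3 := hFn b hbball t ht htT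
      nlinarith
    -- lower bound
    set b' := (1/2 : ℝ) • y + (1 - (1/2 : ℝ)) • q₀ with hb'def
    have hb'ball : ‖b' - y₀‖ < ε := by
      have h1 : b' - y₀ = (1/2 : ℝ) • (y - x) := by
        simp only [hb'def, hq₀def]; module
      rw [h1, norm_smul, Real.norm_eq_abs]
      rw [abs_of_nonneg (by norm_num : (0:ℝ) ≤ 1/2)]
      linarith
    have hlow1 : S t b' ≤ (1/2 : ℝ) • S t y + (1 - (1/2 : ℝ)) • S t q₀ :=
      hconv t ht y q₀ (1/2) (by norm_num) (by norm_num)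
    have hlower : (2 : ℝ) • S t b' - S t q₀ ≤ S t y := by
      have h4 : (2 : ℝ) • S t b' ≤ (2 : ℝ) • ((1/2 : ℝ) • S t y + (1 - (1/2 : ℝ)) • S t q₀) :=
        smul_le_smul_of_nonneg_left hlow1 (by norm_num)
      have h5 : (2 : ℝ) • ((1/2 : ℝ) • S t y + (1 - (1/2 : ℝ)) • S t q₀)
          = S t y + S t q₀ := by module
      rw [h5] at h4
      rwa [sub_le_iff_le_add]
    have hanorm : ‖(2 : ℝ) • S t b' - S t q₀‖ ≤ 2 * (n : ℝ) + Kq := by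
      refine (norm_sub_le _ _).trans ?_
      rw [norm_smul, Real.norm_eq_abs, abs_of_nonneg (by norm_num : (0:ℝ) ≤ 2)]
      have h6 := hFn b' hb'ball t ht htT
      have h7 := hKq t ht htT
      nlinarith
    calc ‖S t y‖ ≤ ‖(2 : ℝ) • S t b' - S t q₀‖
          + ‖(1/2 : ℝ) • S t w₀ + (1 - (1/2 : ℝ)) • S t b‖ :=
        myNorm_le_of_sandwich hlower hupper
      _ ≤ Cs := by rw [hCsdef]; exact add_le_add hanorm hcnorm
  have hCs0 : 0 ≤ Cs :=
    le_trans (norm_nonneg (S 0 x)) (hCstar 0 le_rfl hT.le x (by simp; linarith))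
  -- Step D: small-step Lipschitz estimate
  set ρ := ε / 16 with hρdef
  have hρpos : 0 < ρ := by positivity
  set h₁ := min h₀ (ε / (16 * (M + 1))) with hh₁def
  have hh₁pos : 0 < h₁ := lt_min hh₀ (by positivity)
  set K := (4 * Cs / ρ) * M with hKdef
  have hK0 : 0 ≤ K := mul_nonneg (div_nonneg (by linarith) hρpos.le) hM0
  have hstep : ∀ s h : ℝ, 0 ≤ s → s ≤ T → 0 < h → h ≤ h₁ →
      ‖S (s + h) x - S s x‖ ≤ K * h := by
    intro s h hs hsT hh hhh₁
    have hhh₀ : h ≤ h₀ := hhh₁.trans (min_le_left _ _)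
    have hd : ‖S h x - x‖ ≤ M * h := hdquot h hh hhh₀
    have hdball : ‖S h x - x‖ ≤ ε / 16 := by
      have h2 : h ≤ ε / (16 * (M + 1)) := hhh₁.trans (min_le_right _ _)
      have h3 : (ε / (16 * (M + 1))) * (16 * (M + 1)) = ε :=
        div_mul_cancel₀ _ (by positivity)
      nlinarith [mul_le_mul_of_nonneg_left h2 hM0]
    have hC : ∀ p : X, ‖p - x‖ ≤ ε / 16 + ρ → ‖S s p‖ ≤ Cs := by
      intro p hp
      refine hCstar s hs hsT p ?_
      rw [hρdef] at hp
      linarith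
    have hl := convex_lip (S s) (fun u v a ha ha' => hconv s hs u v a ha ha')
      x (ε / 16) Cs ρ hρpos hC (by linarith) (S h x) x hdball (by simp; linarith)
    have heq : S (s + h) x = S s (S h x) := hsg h s hh.le hs x
    rw [heq]
    calc ‖S s (S h x) - S s x‖ ≤ (4 * Cs / ρ) * ‖S h x - x‖ := hl
      _ ≤ (4 * Cs / ρ) * (M * h) := by
          exact mul_le_mul_of_nonneg_left hd (div_nonneg (by linarith) hρpos.le)
      _ = K * h := by rw [hKdef]; ring
  -- Step E: telescoping
  have hchain : ∀ s t : ℝ, 0 ≤ s → s ≤ t → t ≤ T → ‖S t x - S s x‖ ≤ K * (t - s) := by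
    intro s t hs hst htT
    rcases eq_or_lt_of_le hst with heq | hlt
    · rw [← heq, sub_self, norm_zero, sub_self, mul_zero]
    · set N := ⌈(t - s) / h₁⌉₊ with hNdef
      have hN0 : 0 < N := Nat.ceil_pos.mpr (div_pos (by linarith) hh₁pos)
      have hNpos : (0 : ℝ) < N := Nat.cast_pos.mpr hN0
      set η := (t - s) / N with hηdef
      have hη0 : 0 < η := div_pos (by linarith) hNpos
      have hNη : (N : ℝ) * η = t - s := by
        rw [hηdef, mul_div_cancel₀ _ (ne_of_gt hNpos)]
      have hηh₁ : η ≤ h₁ := by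
        rw [hηdef, div_le_iff₀ hNpos]
        have h8 := Nat.le_ceil ((t - s) / h₁)
        calc t - s = ((t - s) / h₁) * h₁ := by field_simp
          _ ≤ (N : ℝ) * h₁ := mul_le_mul_of_nonneg_right h8 hh₁pos.le
          _ = h₁ * N := by ring
      have hiter : ∀ i : ℕ, i ≤ N → ‖S (s + i * η) x - S s x‖ ≤ K * (i * η) := by
        intro i
        induction i with
        | zero => intro _; simp
        | succ m ih =>
          intro hm
          have hm' : m ≤ N := Nat.le_of_succ_le hm
          have h1 := ih hm'
          have hsm : 0 ≤ s + (m : ℝ) * η := by positivity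
          have hsmT : s + (m : ℝ) * η ≤ T := by
            have h9 : (m : ℝ) * η ≤ (N : ℝ) * η :=
              mul_le_mul_of_nonneg_right (Nat.cast_le.mpr hm') hη0.le
            linarith [hNη]
          have h2 := hstep (s + (m : ℝ) * η) η hsm hsmT hη0 hηh₁
          have harith : s + ((m : ℕ) + 1 : ℕ) * η = (s + (m : ℝ) * η) + η := by
            push_cast; ring
          calc ‖S (s + ((m : ℕ) + 1 : ℕ) * η) x - S s x‖
              ≤ ‖S ((s + (m : ℝ) * η) + η) x - S (s + (m : ℝ) * η) x‖
                + ‖S (s + (m : ℝ) * η) x - S s x‖ := by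
                rw [harith]
                have := dist_triangle (S ((s + (m : ℝ) * η) + η) x)
                  (S (s + (m : ℝ) * η) x) (S s x)
                simpa [dist_eq_norm] using this
            _ ≤ K * η + K * ((m : ℝ) * η) := add_le_add h2 h1
            _ = K * (((m : ℕ) + 1 : ℕ) * η) := by push_cast; ring
      have hfinal := hiter N le_rfl
      rw [hNη] at hfinal
      have h10 : s + (t - s) = t := by ring
      rwa [h10] at hfinal
  -- conclusion
  refine ⟨K, hK0, ?_⟩
  intro s t hsm htm
  rcases le_total s t with h | h
  · rw [abs_of_nonneg (sub_nonneg.mpr h)]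
    exact hchain s t hsm.1 h htm.2
  · rw [abs_sub_comm, abs_of_nonneg (sub_nonneg.mpr h), norm_sub_rev]
    exact hchain t s htm.1 h hsm.2
end

section
/- Let X be a Banach lattice with order continuous norm and let S : X → X be a bounded convex operator. Then for all x, y ∈ X the set {(S(x+hy) − S(x))/h : h > 0} has a greatest lower bound z ∈ X, and the difference quotients converge to it in norm: ‖(S(x+hy) − S(x))/h − z‖ → 0 as h ↓ 0. -/
open Filter Topology Set

/-- On a Banach lattice with order continuous norm (formalized via Dedekind
σ-completeness and σ-order continuity of the norm), for every bounded convex operator `S`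
and all `x, y`, the set of difference quotients `{(S(x+hy) − S(x))/h : h > 0}` has a
greatest lower bound `z`, and the quotients converge to `z` in norm as `h ↓ 0`. -/
theorem convex_operator_directional_derivative_exists
    {X : Type*} [NormedAddCommGroup X] [Lattice X] [IsOrderedAddMonoid X]
    [HasSolidNorm X] [NormedSpace ℝ X] [CompleteSpace X]
    [PosSMulStrictMono ℝ X] [PosSMulReflectLT ℝ X]
    (hDed : ∀ f : ℕ → X, BddAbove (Set.range f) → ∃ s : X, IsLUB (Set.range f) s)
    (hoc : ∀ f : ℕ → X, Antitone f → IsGLB (Set.range f) 0 →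
      Tendsto (fun n => ‖f n‖) atTop (𝓝 (0 : ℝ)))
    (S : X → X)
    (hconv : ∀ x y : X, ∀ a : ℝ, 0 ≤ a → a ≤ 1 →
      S (a • x + (1 - a) • y) ≤ a • S x + (1 - a) • S y)
    (hbdd : ∀ r : ℝ, 0 < r → ∃ M : ℝ, ∀ x : X, ‖x‖ ≤ r → ‖S x‖ ≤ M)
    (x y : X) :
    ∃ z : X,
      IsGLB {w : X | ∃ h : ℝ, 0 < h ∧ w = h⁻¹ • (S (x + h • y) - S x)} z ∧
      Tendsto (fun h : ℝ => h⁻¹ • (S (x + h • y) - S x)) (𝓝[>] (0 : ℝ)) (𝓝 z) := by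
  set Q : ℝ → X := fun h => h⁻¹ • (S (x + h • y) - S x) with hQ
  -- Monotonicity of difference quotients
  have mono : ∀ h₁ h₂ : ℝ, 0 < h₁ → h₁ ≤ h₂ → Q h₁ ≤ Q h₂ := by
    intro h₁ h₂ hh₁ hle
    have hh₂ : 0 < h₂ := lt_of_lt_of_le hh₁ hle
    set a : ℝ := h₁ / h₂ with ha
    have ha0 : 0 ≤ a := div_nonneg hh₁.le hh₂.le
    have ha1 : a ≤ 1 := (div_le_one hh₂).2 hle
    have key : a • (x + h₂ • y) + (1 - a) • x = x + h₁ • y := by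
      have : a * h₂ = h₁ := div_mul_cancel₀ h₁ hh₂.ne'
      rw [smul_add, smul_smul, this]
      module
    have h1 := hconv (x + h₂ • y) x a ha0 ha1
    rw [key] at h1
    have h2 : S (x + h₁ • y) - S x ≤ a • (S (x + h₂ • y) - S x) := by
      have : a • S (x + h₂ • y) + (1 - a) • S x - S x = a • (S (x + h₂ • y) - S x) := by
        module
      calc S (x + h₁ • y) - S x ≤ a • S (x + h₂ • y) + (1 - a) • S x - S x :=
            sub_le_sub_right h1 _
        _ = a • (S (x + h₂ • y) - S x) := this
    have h3 := smul_le_smul_of_nonneg_left h2 (inv_nonneg.2 hh₁.le)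
    have h4 : h₁⁻¹ • a • (S (x + h₂ • y) - S x) = h₂⁻¹ • (S (x + h₂ • y) - S x) := by
      rw [smul_smul]
      congr 1
      rw [ha, div_eq_mul_inv, ← mul_assoc, inv_mul_cancel₀ hh₁.ne', one_mul]
    simpa [hQ, h4] using h3
  -- Uniform lower bound
  have lower : ∀ h : ℝ, 0 < h → S x - S (x - y) ≤ Q h := by
    intro h hh
    set a : ℝ := 1 / (1 + h) with ha
    have h1h : (0:ℝ) < 1 + h := by linarith
    have ha0 : 0 ≤ a := by positivity
    have ha1 : a ≤ 1 := by
      rw [ha, div_le_one h1h]; linarith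
    have key : a • (x + h • y) + (1 - a) • (x - y) = x := by
      have h1a : a * h = 1 - a := by
        rw [ha, div_mul_eq_mul_div, one_mul, eq_sub_iff_add_eq, ← add_div,
          div_eq_one_iff_eq h1h.ne']; ring
      rw [smul_add, smul_sub, smul_smul, h1a]
      have e3 : a + (1 - a) = 1 := by ring
      calc a • x + (1 - a) • y + ((1 - a) • x - (1 - a) • y)
          = (a + (1 - a)) • x := by rw [add_smul]; abel
        _ = x := by rw [e3, one_smul]
    have h1 := hconv (x + h • y) (x - y) a ha0 ha1
    rw [key] at h1
    -- multiply by (1+h)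
    have h2 := smul_le_smul_of_nonneg_left h1 h1h.le
    have e4 : (1 + h) • (a • S (x + h • y) + (1 - a) • S (x - y))
        = S (x + h • y) + h • S (x - y) := by
      have h1a : 1 - a = h / (1 + h) := by
        rw [ha, eq_div_iff h1h.ne', sub_mul, one_div_mul_cancel h1h.ne']; ring
      rw [h1a, ha, smul_add, smul_smul, smul_smul]
      have : (1 + h) * (1 / (1 + h)) = 1 := by field_simp
      rw [this]
      have : (1 + h) * (h / (1 + h)) = h := by field_simp
      rw [this, one_smul]
    rw [e4] at h2
    have h5 : h • (S x - S (x - y)) ≤ S (x + h • y) - S x := by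
      have : (1 + h) • S x = S x + h • S x := by module
      rw [this] at h2
      have := sub_le_sub_right h2 (S x + h • S (x - y))
      calc h • (S x - S (x - y)) = S x + h • S x - (S x + h • S (x - y)) := by module
        _ ≤ S (x + h • y) + h • S (x - y) - (S x + h • S (x - y)) := this
        _ = S (x + h • y) - S x := by module
    have h6 := smul_le_smul_of_nonneg_left h5 (inv_nonneg.2 hh.le)
    rw [smul_smul, inv_mul_cancel₀ hh.ne', one_smul] at h6
    simpa [hQ] using h6
  -- the decreasing sequence
  set f : ℕ → X := fun n => Q (1 / (n + 1)) with hf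
  have hfpos : ∀ n : ℕ, (0:ℝ) < 1 / (n + 1) := by
    intro n; positivity
  have hanti : Antitone f := by
    intro n m hnm
    refine mono _ _ (hfpos m) ?_
    apply one_div_le_one_div_of_le (by positivity)
    have : (n:ℝ) ≤ m := Nat.cast_le.2 hnm
    linarith
  -- lower bound for the sequence
  have hflb : ∀ n, S x - S (x - y) ≤ f n := fun n => lower _ (hfpos n)
  -- get the GLB via Dedekind completeness applied to -f
  obtain ⟨s, hs⟩ := hDed (fun n => -f n) ⟨-(S x - S (x - y)), by
    rintro w ⟨n, rfl⟩
    exact neg_le_neg (hflb n)⟩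
  set z : X := -s with hz
  have hzle : ∀ n, z ≤ f n := by
    intro n
    have : -f n ≤ s := hs.1 ⟨n, rfl⟩
    simpa [hz] using neg_le_neg this
  have hzgr : ∀ w : X, (∀ n, w ≤ f n) → w ≤ z := by
    intro w hw
    have : s ≤ -w := hs.2 (by rintro v ⟨n, rfl⟩; exact neg_le_neg (hw n))
    simpa [hz] using neg_le_neg this
  -- z is the GLB of the full set of difference quotients
  have hGLB : IsGLB {w : X | ∃ h : ℝ, 0 < h ∧ w = h⁻¹ • (S (x + h • y) - S x)} z := by
    constructor
    · rintro w ⟨h, hh, rfl⟩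
      obtain ⟨n, hn⟩ := exists_nat_one_div_lt hh
      calc z ≤ f n := hzle n
        _ ≤ Q h := mono _ _ (hfpos n) hn.le
    · intro w hw
      refine hzgr w fun n => hw ⟨1 / (n + 1), hfpos n, by simp [hf, hQ]⟩
  refine ⟨z, hGLB, ?_⟩
  -- norm convergence of f n to z
  have hganti : Antitone (fun n => f n - z) := fun n m hnm =>
    sub_le_sub_right (hanti hnm) z
  have hgGLB : IsGLB (Set.range fun n => f n - z) 0 := by
    constructor
    · rintro w ⟨n, rfl⟩
      exact sub_nonneg.2 (hzle n)
    · intro w hw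
      have h1 : ∀ n, w + z ≤ f n := fun n =>
        le_sub_iff_add_le.1 (hw ⟨n, rfl⟩)
      exact add_le_iff_nonpos_left.1 (hzgr (w + z) h1)
  have hnorm := hoc (fun n => f n - z) hganti hgGLB
  -- conclude via metric characterization
  rw [Metric.tendsto_nhdsWithin_nhds]
  intro ε hε
  rw [Metric.tendsto_atTop] at hnorm
  obtain ⟨N, hN⟩ := hnorm ε hε
  refine ⟨1 / (N + 1), hfpos N, ?_⟩
  intro h hh hdist
  have hh' : 0 < h := hh
  have hle : h ≤ 1 / (N + 1) := by
    rw [Real.dist_eq, sub_zero, abs_of_pos hh'] at hdist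
    exact hdist.le
  have h1 : z ≤ Q h := hGLB.1 ⟨h, hh', rfl⟩
  have h2 : Q h ≤ f N := mono _ _ hh' hle
  have habs : |Q h - z| ≤ |f N - z| := by
    rw [abs_of_nonneg (sub_nonneg.2 h1), abs_of_nonneg (sub_nonneg.2 (h1.trans h2))]
    exact sub_le_sub_right h2 z
  have hnle : ‖Q h - z‖ ≤ ‖f N - z‖ := HasSolidNorm.solid habs
  have := hN N le_rfl
  rw [Real.dist_eq, sub_zero, abs_of_nonneg (norm_nonneg _)] at this
  rw [dist_eq_norm]
  exact lt_of_le_of_lt hnle this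
end

section
/- Let X be a Banach lattice with order continuous norm, S a convex C₀-semigroup on X with generator A. Then for every x ∈ D(A) and every t ≥ 0, one has S(t)x ∈ D(A) and A S(t)x = S'₊(t,x)(Ax), i.e., lim_{h↓0} (S(h)S(t)x − S(t)x)/h exists in norm and equals lim_{h↓0} (S(t)(x + hAx) − S(t)x)/h. -/
open Filter Topology Set

variable {X : Type*} [NormedAddCommGroup X] [Lattice X] [IsOrderedAddMonoid X] [HasSolidNorm X] [NormedSpace ℝ X] [CompleteSpace X]

/-- Domain of the generator of a semigroup `S`: the set of `x` for which the difference
quotients `(S(h)x − x)/h` converge in norm as `h ↓ 0`. -/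
def genDom (S : ℝ → X → X) : Set X :=
  {x : X | ∃ z : X, Tendsto (fun h : ℝ => h⁻¹ • (S h x - x)) (𝓝[>] (0 : ℝ)) (𝓝 z)}

/-- One-sided bound for a convex bounded operator. -/
lemma aux_convex_onesided [PosSMulStrictMono ℝ X] (T : X → X)
    (hc : ∀ u v : X, ∀ a : ℝ, 0 ≤ a → a ≤ 1 → T (a • u + (1 - a) • v) ≤ a • T u + (1 - a) • T v)
    (r M : ℝ) (hr : 0 < r) (hM : ∀ u : X, ‖u‖ ≤ 2 * r → ‖T u‖ ≤ M)
    (u v : X) (hu : ‖u‖ ≤ r) (hv : ‖v‖ ≤ r) :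
    ∃ p : X, 0 ≤ p ∧ ‖p‖ ≤ 2 * M ∧ T u - T v ≤ (‖u - v‖ / r) • p := by
  rcases eq_or_ne u v with rfl | hne
  · exact ⟨0, le_rfl, by simpa using (norm_nonneg _).trans (hM 0 (by simp; positivity)), by simp⟩
  have hd : 0 < ‖u - v‖ := by
    rw [norm_pos_iff]; exact sub_ne_zero.2 hne
  set d : ℝ := ‖u - v‖ with hd_def
  have hdr : 0 < d + r := by linarith
  set a : ℝ := d / (d + r) with ha_def
  have ha0 : 0 ≤ a := by positivity
  have ha1 : a ≤ 1 := by
    rw [div_le_one hdr]; linarith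
  set w : X := u + (r / d) • (u - v) with hw_def
  have key : a • w + (1 - a) • v = u := by
    rw [hw_def]
    match_scalars
    · rw [ha_def]; field_simp
    · rw [ha_def]; field_simp; ring
  have hTu : T u ≤ a • T w + (1 - a) • T v := by
    have := hc w v a ha0 ha1
    rwa [key] at this
  have hwnorm : ‖w‖ ≤ 2 * r := by
    have : ‖(r / d) • (u - v)‖ = r := by
      rw [norm_smul, Real.norm_eq_abs, abs_of_pos (by positivity)]
      field_simp; rfl
    calc ‖w‖ ≤ ‖u‖ + ‖(r / d) • (u - v)‖ := norm_add_le _ _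
      _ ≤ r + r := by rw [this]; linarith
      _ = 2 * r := by ring
  refine ⟨|T w| + |T v|, by positivity, ?_, ?_⟩
  · calc ‖|T w| + |T v|‖ ≤ ‖|T w|‖ + ‖|T v|‖ := norm_add_le _ _
      _ = ‖T w‖ + ‖T v‖ := by rw [norm_abs_eq_norm, norm_abs_eq_norm]
      _ ≤ M + M := add_le_add (hM _ hwnorm) (hM _ (hv.trans (by linarith)))
      _ = 2 * M := by ring
  · have step1 : T u - T v ≤ a • (T w - T v) := by
      have e : a • T w + (1 - a) • T v - T v = a • (T w - T v) := by
        rw [sub_smul, one_smul, smul_sub]; abel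
      calc T u - T v ≤ a • T w + (1 - a) • T v - T v := sub_le_sub_right hTu _
        _ = a • (T w - T v) := e
    have step2 : T w - T v ≤ |T w| + |T v| := by
      have := sub_le_sub (le_abs_self (T w)) (neg_le.mpr (neg_le_abs (T v)))
      rwa [sub_neg_eq_add] at this
    have step3 : a • (T w - T v) ≤ a • (|T w| + |T v|) :=
      smul_le_smul_of_nonneg_left step2 ha0
    have hadr : a ≤ d / r := by
      rw [ha_def, div_le_div_iff₀ hdr hr]
      nlinarith
    have step4 : a • (|T w| + |T v|) ≤ (d / r) • (|T w| + |T v|) := by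
      have h0 : (0:X) ≤ (d / r - a) • (|T w| + |T v|) :=
        smul_nonneg (by linarith) (by positivity)
      have : (d / r) • (|T w| + |T v|) - a • (|T w| + |T v|) = (d / r - a) • (|T w| + |T v|) := by
        rw [sub_smul]
      exact sub_nonneg.mp (this ▸ h0)
    exact step1.trans (step3.trans step4)

/-- A bounded convex operator is Lipschitz on balls. -/
lemma aux_convex_lip [PosSMulStrictMono ℝ X] (T : X → X)
    (hc : ∀ u v : X, ∀ a : ℝ, 0 ≤ a → a ≤ 1 → T (a • u + (1 - a) • v) ≤ a • T u + (1 - a) • T v)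
    (r M : ℝ) (hr : 0 < r) (hM : ∀ u : X, ‖u‖ ≤ 2 * r → ‖T u‖ ≤ M)
    (u v : X) (hu : ‖u‖ ≤ r) (hv : ‖v‖ ≤ r) :
    ‖T u - T v‖ ≤ (4 * M / r) * ‖u - v‖ := by
  obtain ⟨p₁, hp₁0, hp₁n, hp₁⟩ := aux_convex_onesided T hc r M hr hM u v hu hv
  obtain ⟨p₂, hp₂0, hp₂n, hp₂⟩ := aux_convex_onesided T hc r M hr hM v u hv hu
  rw [norm_sub_rev v u] at hp₂
  set c : ℝ := ‖u - v‖ / r with hc_def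
  have hc0 : 0 ≤ c := by positivity
  have habs : |T u - T v| ≤ c • (p₁ + p₂) := by
    refine abs_le'.2 ⟨?_, ?_⟩
    · exact hp₁.trans (smul_le_smul_of_nonneg_left (le_add_of_nonneg_right hp₂0) hc0)
    · rw [neg_sub]
      exact hp₂.trans (smul_le_smul_of_nonneg_left (le_add_of_nonneg_left hp₁0) hc0)
  have hn : ‖T u - T v‖ ≤ ‖c • (p₁ + p₂)‖ := by
    apply norm_le_norm_of_abs_le_abs
    rwa [abs_of_nonneg (smul_nonneg hc0 (add_nonneg hp₁0 hp₂0))]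
  calc ‖T u - T v‖ ≤ ‖c • (p₁ + p₂)‖ := hn
    _ = c * ‖p₁ + p₂‖ := by rw [norm_smul, Real.norm_eq_abs, abs_of_nonneg hc0]
    _ ≤ c * (2 * M + 2 * M) := by
        apply mul_le_mul_of_nonneg_left _ hc0
        exact (norm_add_le _ _).trans (add_le_add hp₁n hp₂n)
    _ = (4 * M / r) * ‖u - v‖ := by rw [hc_def]; ring

/-- Existence of the right limit at 0 for monotone, bounded-below families. -/
lemma aux_exists_tendsto (hDed : ∀ f : ℕ → X, BddAbove (Set.range f) → ∃ s : X, IsLUB (Set.range f) s)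
    (hoc : ∀ f : ℕ → X, Antitone f → IsGLB (Set.range f) 0 →
      Tendsto (fun n => ‖f n‖) atTop (𝓝 (0 : ℝ)))
    (q : ℝ → X)
    (hmono : ∀ h₁ h₂ : ℝ, 0 < h₁ → h₁ ≤ h₂ → q h₁ ≤ q h₂)
    (c : X) (hlb : ∀ h : ℝ, 0 < h → c ≤ q h) :
    ∃ z : X, Tendsto q (𝓝[>] (0 : ℝ)) (𝓝 z) := by
  set f : ℕ → X := fun n => q ((n + 1 : ℝ)⁻¹) with hf_def
  have hpos : ∀ n : ℕ, (0:ℝ) < (n + 1 : ℝ)⁻¹ := fun n => by positivity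
  have hanti : Antitone f := by
    intro m n hmn
    apply hmono _ _ (hpos n)
    apply inv_anti₀ (by positivity)
    exact_mod_cast Nat.add_le_add_right hmn 1
  obtain ⟨s, hs⟩ := hDed (fun n => -f n) ⟨-c, by rintro _ ⟨n, rfl⟩; simp [hlb _ (hpos n)]; exact hlb _ (hpos n)⟩
  set z : X := -s with hz_def
  have hzle : ∀ n, z ≤ f n := by
    intro n
    have := hs.1 (mem_range_self (f := fun n => -f n) n)
    simpa [hz_def] using neg_le_neg this
  have hzglb : ∀ w : X, (∀ n, w ≤ f n) → w ≤ z := by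
    intro w hw
    have : s ≤ -w := hs.2 (by rintro _ ⟨n, rfl⟩; exact neg_le_neg (hw n))
    simpa [hz_def] using neg_le_neg this
  have hF : Tendsto (fun n => ‖f n - z‖) atTop (𝓝 (0:ℝ)) := by
    apply hoc
    · intro m n hmn; exact sub_le_sub_right (hanti hmn) _
    · constructor
      · rintro _ ⟨n, rfl⟩; simpa using hzle n
      · intro w hw
        have : ∀ n, w + z ≤ f n := by
          intro n
          have := hw (mem_range_self (f := fun n => f n - z) n)
          simpa [le_sub_iff_add_le] using this
        simpa using hzglb _ this
  have hzq : ∀ h : ℝ, 0 < h → z ≤ q h := by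
    intro h hh
    obtain ⟨n, hn⟩ := exists_nat_one_div_lt hh
    have h1 : ((n:ℝ) + 1)⁻¹ ≤ h := by
      rw [one_div] at hn; exact le_of_lt hn
    exact (hzle n).trans (hmono _ _ (hpos n) h1)
  refine ⟨z, Metric.tendsto_nhdsWithin_nhds.2 ?_⟩
  intro ε hε
  have := (Metric.tendsto_atTop.1 hF) ε hε
  obtain ⟨N, hN⟩ := this
  have hNd : ‖f N - z‖ < ε := by
    have := hN N le_rfl
    rwa [Real.dist_eq, sub_zero, abs_of_nonneg (norm_nonneg _)] at this
  refine ⟨((N:ℝ) + 1)⁻¹, hpos N, ?_⟩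
  intro h hh hd
  rw [Real.dist_eq, sub_zero, abs_of_pos hh] at hd
  rw [dist_eq_norm]
  have hqf : q h ≤ f N := hmono _ _ hh hd.le
  have habs : |q h - z| ≤ |f N - z| := by
    rw [abs_of_nonneg (sub_nonneg.2 (hzq h hh)), abs_of_nonneg (sub_nonneg.2 (hzle N))]
    exact sub_le_sub_right hqf _
  exact lt_of_le_of_lt (norm_le_norm_of_abs_le_abs habs) hNd

/-- Invariance of the domain: for a convex C₀-semigroup `S` on a Banach
lattice with order continuous norm, with generator `A`, for `x ∈ D(A)` and `t ≥ 0` one has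
`S(t)x ∈ D(A)` and `A S(t)x = S'₊(t,x)(Ax)`, i.e. the difference quotients
`(S(t)(x + h·Ax) − S(t)x)/h` converge to `A(S(t)x)` as `h ↓ 0`. -/
theorem generator_domain_invariant
    [PosSMulStrictMono ℝ X]
    (hDed : ∀ f : ℕ → X, BddAbove (Set.range f) → ∃ s : X, IsLUB (Set.range f) s)
    (hoc : ∀ f : ℕ → X, Antitone f → IsGLB (Set.range f) 0 →
      Tendsto (fun n => ‖f n‖) atTop (𝓝 (0 : ℝ)))
    (S : ℝ → X → X)
    (hconv : ∀ t : ℝ, 0 ≤ t → ∀ x y : X, ∀ a : ℝ, 0 ≤ a → a ≤ 1 →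
      S t (a • x + (1 - a) • y) ≤ a • S t x + (1 - a) • S t y)
    (hbdd : ∀ t : ℝ, 0 ≤ t → ∀ r : ℝ, 0 < r → ∃ M : ℝ, ∀ x : X, ‖x‖ ≤ r → ‖S t x‖ ≤ M)
    (hid : ∀ x : X, S 0 x = x)
    (hsg : ∀ s t : ℝ, 0 ≤ s → 0 ≤ t → ∀ x : X, S (t + s) x = S t (S s x))
    (hc0 : ∀ x : X, Tendsto (fun t : ℝ => S t x) (𝓝[>] (0 : ℝ)) (𝓝 x))
    (A : X → X)
    (hA : ∀ x ∈ genDom S, Tendsto (fun h : ℝ => h⁻¹ • (S h x - x)) (𝓝[>] (0 : ℝ)) (𝓝 (A x)))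
    (x : X) (hx : x ∈ genDom S) (t : ℝ) (ht : 0 ≤ t) :
    S t x ∈ genDom S ∧
    Tendsto (fun h : ℝ => h⁻¹ • (S t (x + h • A x) - S t x)) (𝓝[>] (0 : ℝ))
      (𝓝 (A (S t x))) := by
  set q : ℝ → X := fun h => h⁻¹ • (S t (x + h • A x) - S t x) with hq_def
  -- monotonicity of the difference quotients
  have hq_mono : ∀ h₁ h₂ : ℝ, 0 < h₁ → h₁ ≤ h₂ → q h₁ ≤ q h₂ := by
    intro h₁ h₂ h1 h12
    have h2 : 0 < h₂ := lt_of_lt_of_le h1 h12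
    set a : ℝ := h₁ / h₂ with ha
    have ha0 : 0 ≤ a := by positivity
    have ha1 : a ≤ 1 := by rw [ha, div_le_one h2]; exact h12
    have key : a • (x + h₂ • A x) + (1 - a) • x = x + h₁ • A x := by
      match_scalars
      · ring
      · rw [ha]; field_simp
    have hcv := hconv t ht (x + h₂ • A x) x a ha0 ha1
    rw [key] at hcv
    have e1 : a • S t (x + h₂ • A x) + (1 - a) • S t x - S t x
        = a • (S t (x + h₂ • A x) - S t x) := by
      rw [sub_smul, one_smul, smul_sub]; abel
    calc q h₁ = h₁⁻¹ • (S t (x + h₁ • A x) - S t x) := rfl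
      _ ≤ h₁⁻¹ • (a • (S t (x + h₂ • A x) - S t x)) := by
          rw [← e1]
          exact smul_le_smul_of_nonneg_left (sub_le_sub_right hcv _) (by positivity)
      _ = q h₂ := by
          rw [smul_smul, hq_def]
          congr 1
          rw [ha]
          field_simp
  -- lower bound for the difference quotients
  have hq_lb : ∀ h : ℝ, 0 < h → S t x - S t (x - A x) ≤ q h := by
    intro h hh
    have h1h : (0:ℝ) < 1 + h := by linarith
    set b : ℝ := (1 + h)⁻¹ with hb
    have hb0 : 0 ≤ b := by positivity
    have hb1 : b ≤ 1 := by
      rw [hb]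
      exact inv_le_one_of_one_le₀ (by linarith)
    have key : b • (x + h • A x) + (1 - b) • (x - A x) = x := by
      match_scalars
      · rw [hb]; field_simp; ring
      · rw [hb]; field_simp; ring
    have hcv := hconv t ht (x + h • A x) (x - A x) b hb0 hb1
    rw [key] at hcv
    have step : (1 + h) • S t x ≤ S t (x + h • A x) + h • S t (x - A x) := by
      have h' := smul_le_smul_of_nonneg_left hcv h1h.le
      rw [smul_add, smul_smul, smul_smul] at h'
      rw [show (1 + h) * b = 1 by rw [hb]; field_simp,
        show (1 + h) * (1 - b) = h by rw [hb]; field_simp; ring, one_smul] at h'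
      exact h'
    have step2 : h • (S t x - S t (x - A x)) ≤ S t (x + h • A x) - S t x := by
      have e : h • (S t x - S t (x - A x))
          = (1 + h) • S t x - S t x - h • S t (x - A x) := by
        rw [add_smul, one_smul, smul_sub]; abel
      rw [e]
      calc (1 + h) • S t x - S t x - h • S t (x - A x)
          ≤ (S t (x + h • A x) + h • S t (x - A x)) - S t x - h • S t (x - A x) := by
            exact sub_le_sub_right (sub_le_sub_right step _) _
        _ = S t (x + h • A x) - S t x := by abel
    have h' := smul_le_smul_of_nonneg_left step2 (inv_nonneg.2 hh.le)
    rwa [smul_smul, inv_mul_cancel₀ hh.ne', one_smul] at h'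
  obtain ⟨z, hz⟩ := aux_exists_tendsto hDed hoc q hq_mono _ hq_lb
  -- the semigroup quotient at S t x
  set Y : ℝ → X := fun h => h⁻¹ • (S h x - x) with hY_def
  have hy : Tendsto Y (𝓝[>] (0:ℝ)) (𝓝 (A x)) := hA x hx
  have hy0 : Tendsto (fun h => ‖Y h - A x‖) (𝓝[>] (0:ℝ)) (𝓝 (0:ℝ)) :=
    tendsto_iff_norm_sub_tendsto_zero.mp hy
  set r : ℝ := ‖x‖ + ‖A x‖ + 2 with hr_def
  have hr : 0 < r := by positivity
  obtain ⟨M, hM⟩ := hbdd t ht (2 * r) (by positivity)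
  set Q : ℝ → X := fun h => h⁻¹ • (S h (S t x) - S t x) with hQ_def
  have hbound : ∀ᶠ h in 𝓝[>] (0:ℝ), ‖Q h - q h‖ ≤ (4 * M / r) * ‖Y h - A x‖ := by
    have ev1 : ∀ᶠ h in 𝓝[>] (0:ℝ), h ∈ Ioo (0:ℝ) 1 :=
      Ioo_mem_nhdsGT_of_mem ⟨le_rfl, one_pos⟩
    have ev2 : ∀ᶠ h in 𝓝[>] (0:ℝ), ‖Y h - A x‖ < 1 :=
      hy0.eventually_lt_const one_pos
    filter_upwards [ev1, ev2] with h hh hyn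
    have hh0 : 0 < h := hh.1
    have hcomm : S h (S t x) = S t (S h x) := by
      rw [← hsg t h ht hh0.le x, ← hsg h t hh0.le ht x, add_comm]
    have hxe : S h x = x + h • Y h := by
      rw [hY_def]
      simp only []
      rw [smul_inv_smul₀ hh0.ne']
      abel
    have hdiffeq : Q h - q h = h⁻¹ • (S t (x + h • Y h) - S t (x + h • A x)) := by
      rw [hQ_def, hq_def]
      simp only []
      rw [hcomm, hxe, ← smul_sub]
      congr 1
      abel
    have hyhn : ‖Y h‖ ≤ ‖A x‖ + 1 := by
      calc ‖Y h‖ = ‖(Y h - A x) + A x‖ := by congr 1; abel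
        _ ≤ ‖Y h - A x‖ + ‖A x‖ := norm_add_le _ _
        _ ≤ ‖A x‖ + 1 := by linarith
    have hnorm1 : ‖x + h • Y h‖ ≤ r := by
      have hm : h * ‖Y h‖ ≤ 1 * (‖A x‖ + 1) :=
        mul_le_mul hh.2.le hyhn (norm_nonneg _) one_pos.le
      calc ‖x + h • Y h‖ ≤ ‖x‖ + ‖h • Y h‖ := norm_add_le _ _
        _ = ‖x‖ + h * ‖Y h‖ := by rw [norm_smul, Real.norm_eq_abs, abs_of_pos hh0]
        _ ≤ r := by rw [hr_def]; nlinarith [norm_nonneg (Y h)]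
    have hnorm2 : ‖x + h • A x‖ ≤ r := by
      calc ‖x + h • A x‖ ≤ ‖x‖ + ‖h • A x‖ := norm_add_le _ _
        _ = ‖x‖ + h * ‖A x‖ := by rw [norm_smul, Real.norm_eq_abs, abs_of_pos hh0]
        _ ≤ r := by
            rw [hr_def]
            nlinarith [mul_le_mul_of_nonneg_right hh.2.le (norm_nonneg (A x))]
    have hlip := aux_convex_lip (S t) (fun u v a h0 h1 => hconv t ht u v a h0 h1)
      r M hr hM _ _ hnorm1 hnorm2
    have harg : (x + h • Y h) - (x + h • A x) = h • (Y h - A x) := by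
      rw [smul_sub]; abel
    rw [hdiffeq, norm_smul, Real.norm_eq_abs, abs_of_pos (inv_pos.2 hh0)]
    calc h⁻¹ * ‖S t (x + h • Y h) - S t (x + h • A x)‖
        ≤ h⁻¹ * ((4 * M / r) * ‖(x + h • Y h) - (x + h • A x)‖) :=
          mul_le_mul_of_nonneg_left hlip (by positivity)
      _ = h⁻¹ * ((4 * M / r) * (h * ‖Y h - A x‖)) := by
          rw [harg, norm_smul, Real.norm_eq_abs, abs_of_pos hh0]
      _ = (4 * M / r) * ‖Y h - A x‖ := by
          field_simp
  have hdiff0 : Tendsto (fun h => Q h - q h) (𝓝[>] (0:ℝ)) (𝓝 0) := by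
    apply squeeze_zero_norm' hbound
    have : Tendsto (fun h => (4 * M / r) * ‖Y h - A x‖) (𝓝[>] (0:ℝ)) (𝓝 ((4 * M / r) * 0)) :=
      tendsto_const_nhds.mul hy0
    simpa using this
  have hQz : Tendsto Q (𝓝[>] (0:ℝ)) (𝓝 z) := by
    have h' := hdiff0.add hz
    simp only [sub_add_cancel, zero_add] at h'
    exact h'
  have hmem : S t x ∈ genDom S := ⟨z, hQz⟩
  have hzA : z = A (S t x) := tendsto_nhds_unique hQz (hA _ hmem)
  exact ⟨hmem, hzA ▸ hz⟩
end
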